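/- arXiv:1111.3011 — 2 statements merged into one kernel-verified Lean document; each statement's English description precedes it below -/
import Mathlib

section
/- Let J be an invertible Hermitian N×N complex matrix and A₁, A₂ two diagonalizable J-selfadjoint N×N matrices with all eigenvalues real, such that D = {x : A₁x = A₂x} has codimension n. For an open real interval Δ, let Lⱼ denote the sum of the eigenspaces of Aⱼ for eigenvalues in Δ, and let sig(Lⱼ) = κ₊(Lⱼ) - κ₋(Lⱼ) be the difference of the numbers of positive and negative squares of the form [x,y] = (Jx,y) restricted to Lⱼ. Then |sig(L₂) - sig(L₁)| ≤ n. -/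
open Matrix

/-- `A` is diagonalizable. -/
def Diagonalizable {N : ℕ} (A : Matrix (Fin N) (Fin N) ℂ) : Prop :=
  ∃ P D : Matrix (Fin N) (Fin N) ℂ, IsUnit P.det ∧ D.IsDiag ∧ A = P * D * P⁻¹

/-- The indefinite inner product `[x,y] = (Jx, y)` on `ℂᴺ`. -/
noncomputable def Jform {N : ℕ} (J : Matrix (Fin N) (Fin N) ℂ) (x y : Fin N → ℂ) : ℂ :=
  star (J *ᵥ x) ⬝ᵥ y

/-- Number of positive squares of `[·,·]` on the subspace `L`:
the maximal dimension of a subspace of `L` on which the form is positive definite. -/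
noncomputable def posSquares {N : ℕ} (J : Matrix (Fin N) (Fin N) ℂ)
    (L : Submodule ℂ (Fin N → ℂ)) : ℕ :=
  sSup {d : ℕ | ∃ W : Submodule ℂ (Fin N → ℂ), W ≤ L ∧ Module.finrank ℂ W = d ∧
    ∀ x ∈ W, x ≠ 0 → 0 < (Jform J x x).re}

/-- Number of negative squares of `[·,·]` on the subspace `L`. -/
noncomputable def negSquares {N : ℕ} (J : Matrix (Fin N) (Fin N) ℂ)
    (L : Submodule ℂ (Fin N → ℂ)) : ℕ :=
  sSup {d : ℕ | ∃ W : Submodule ℂ (Fin N → ℂ), W ≤ L ∧ Module.finrank ℂ W = d ∧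
    ∀ x ∈ W, x ≠ 0 → (Jform J x x).re < 0}

/-- The signature `sig(L) = κ₊(L) - κ₋(L)`. -/
noncomputable def sig {N : ℕ} (J : Matrix (Fin N) (Fin N) ℂ)
    (L : Submodule ℂ (Fin N → ℂ)) : ℤ :=
  (posSquares J L : ℤ) - negSquares J L

/-- Sum of the eigenspaces of `A` for (real) eigenvalues in `Δ`. -/
noncomputable def eigSpan {N : ℕ} (A : Matrix (Fin N) (Fin N) ℂ) (Δ : Set ℝ) :
    Submodule ℂ (Fin N → ℂ) :=
  ⨆ μ ∈ Δ, Module.End.eigenspace (Matrix.toLin' A) (μ : ℂ)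


namespace Work
variable {N : ℕ}

lemma Jform_neg_mat (H : Matrix (Fin N) (Fin N) ℂ) (x y : Fin N → ℂ) :
    Jform (-H) x y = -(Jform H x y) := by
  simp [Jform, neg_mulVec, neg_dotProduct]

lemma Jform_sub_mat (H K : Matrix (Fin N) (Fin N) ℂ) (x y : Fin N → ℂ) :
    Jform (H - K) x y = Jform H x y - Jform K x y := by
  simp [Jform, sub_mulVec, sub_dotProduct]

lemma Jform_add_mat (H K : Matrix (Fin N) (Fin N) ℂ) (x y : Fin N → ℂ) :
    Jform (H + K) x y = Jform H x y + Jform K x y := by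
  simp [Jform, add_mulVec, add_dotProduct]

lemma Jform_smul_mat (H : Matrix (Fin N) (Fin N) ℂ) (a : ℂ) (x y : Fin N → ℂ) :
    Jform (a • H) x y = (starRingEnd ℂ a) * Jform H x y := by
  simp [Jform, smul_mulVec, smul_dotProduct]

lemma Jform_smul_left (H : Matrix (Fin N) (Fin N) ℂ) (a : ℂ) (x y : Fin N → ℂ) :
    Jform H (a • x) y = (starRingEnd ℂ a) * Jform H x y := by
  simp [Jform, mulVec_smul, smul_dotProduct]

lemma Jform_smul_right (H : Matrix (Fin N) (Fin N) ℂ) (a : ℂ) (x y : Fin N → ℂ) :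
    Jform H x (a • y) = a * Jform H x y := by
  simp [Jform, dotProduct_smul]

lemma Jform_add_left (H : Matrix (Fin N) (Fin N) ℂ) (x x' y : Fin N → ℂ) :
    Jform H (x + x') y = Jform H x y + Jform H x' y := by
  simp [Jform, mulVec_add, add_dotProduct]

lemma Jform_add_right (H : Matrix (Fin N) (Fin N) ℂ) (x y y' : Fin N → ℂ) :
    Jform H x (y + y') = Jform H x y + Jform H x y' := by
  simp [Jform, dotProduct_add]

lemma Jform_zero_left (H : Matrix (Fin N) (Fin N) ℂ) (y : Fin N → ℂ) :
    Jform H 0 y = 0 := by simp [Jform]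

lemma Jform_zero_right (H : Matrix (Fin N) (Fin N) ℂ) (x : Fin N → ℂ) :
    Jform H x 0 = 0 := by simp [Jform]

lemma Jform_sum_left {ι : Type*} (H : Matrix (Fin N) (Fin N) ℂ) (s : Finset ι)
    (f : ι → (Fin N → ℂ)) (y : Fin N → ℂ) :
    Jform H (∑ i ∈ s, f i) y = ∑ i ∈ s, Jform H (f i) y := by
  classical
  induction s using Finset.induction with
  | empty => simp [Jform_zero_left]
  | insert _ _ h ih => rw [Finset.sum_insert h, Finset.sum_insert h, Jform_add_left, ih]

lemma Jform_sum_right {ι : Type*} (H : Matrix (Fin N) (Fin N) ℂ) (s : Finset ι)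
    (f : ι → (Fin N → ℂ)) (x : Fin N → ℂ) :
    Jform H x (∑ i ∈ s, f i) = ∑ i ∈ s, Jform H x (f i) := by
  classical
  induction s using Finset.induction with
  | empty => simp [Jform_zero_right]
  | insert _ _ h ih => rw [Finset.sum_insert h, Finset.sum_insert h, Jform_add_right, ih]

lemma Jform_mul_mat (M B : Matrix (Fin N) (Fin N) ℂ) (x y : Fin N → ℂ) :
    Jform (M * B) x y = Jform M (B *ᵥ x) y := by
  simp [Jform, mulVec_mulVec]

lemma Jform_herm_eq (H : Matrix (Fin N) (Fin N) ℂ) (hH : H.IsHermitian) (x y : Fin N → ℂ) :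
    Jform H x y = star x ⬝ᵥ (H *ᵥ y) := by
  rw [Jform, star_mulVec, dotProduct_mulVec, hH.eq]

lemma Jform_conj (H : Matrix (Fin N) (Fin N) ℂ) (hH : H.IsHermitian) (x y : Fin N → ℂ) :
    Jform H y x = starRingEnd ℂ (Jform H x y) := by
  rw [Jform_herm_eq H hH, Jform]
  simp only [dotProduct, map_sum, _root_.map_mul, Pi.star_apply, RCLike.star_def,
    Complex.conj_conj]
  exact Finset.sum_congr rfl fun i _ => mul_comm _ _

/-! ### posSquares interface -/

def PosOn (H : Matrix (Fin N) (Fin N) ℂ) (W : Submodule ℂ (Fin N → ℂ)) : Prop :=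
  ∀ x ∈ W, x ≠ 0 → 0 < (Jform H x x).re

def NonposOn (H : Matrix (Fin N) (Fin N) ℂ) (W : Submodule ℂ (Fin N → ℂ)) : Prop :=
  ∀ x ∈ W, (Jform H x x).re ≤ 0

lemma PosOn.neg_nonpos {H : Matrix (Fin N) (Fin N) ℂ} {W : Submodule ℂ (Fin N → ℂ)}
    (h : PosOn (-H) W) : NonposOn H W := by
  intro x hx
  by_cases hx0 : x = 0
  · simp [hx0, Jform_zero_left]
  · have := h x hx hx0
    rw [Jform_neg_mat] at this
    simp only [Complex.neg_re] at this
    linarith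

lemma finrank_ambient : Module.finrank ℂ (Fin N → ℂ) = N := by simp

lemma posSquares_set (H : Matrix (Fin N) (Fin N) ℂ) (L : Submodule ℂ (Fin N → ℂ)) :
    posSquares H L = sSup {d : ℕ | ∃ W : Submodule ℂ (Fin N → ℂ), W ≤ L ∧
      Module.finrank ℂ W = d ∧ PosOn H W} := rfl

lemma zero_mem_posSet (H : Matrix (Fin N) (Fin N) ℂ) (L : Submodule ℂ (Fin N → ℂ)) :
    0 ∈ {d : ℕ | ∃ W : Submodule ℂ (Fin N → ℂ), W ≤ L ∧
      Module.finrank ℂ W = d ∧ PosOn H W} :=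
  ⟨⊥, bot_le, finrank_bot ℂ _, fun x hx hx0 => absurd (Submodule.mem_bot ℂ |>.mp hx) hx0⟩

lemma bddAbove_posSet (H : Matrix (Fin N) (Fin N) ℂ) (L : Submodule ℂ (Fin N → ℂ)) :
    BddAbove {d : ℕ | ∃ W : Submodule ℂ (Fin N → ℂ), W ≤ L ∧
      Module.finrank ℂ W = d ∧ PosOn H W} := by
  refine ⟨N, fun d hd => ?_⟩
  obtain ⟨W, -, rfl, -⟩ := hd
  exact le_trans (Submodule.finrank_le W) (le_of_eq finrank_ambient)

lemma exists_posSquares_witness (H : Matrix (Fin N) (Fin N) ℂ) (L : Submodule ℂ (Fin N → ℂ)) :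
    ∃ W : Submodule ℂ (Fin N → ℂ), W ≤ L ∧
      Module.finrank ℂ W = posSquares H L ∧ PosOn H W :=
  Nat.sSup_mem ⟨0, zero_mem_posSet H L⟩ (bddAbove_posSet H L)

lemma le_posSquares (H : Matrix (Fin N) (Fin N) ℂ) {L W : Submodule ℂ (Fin N → ℂ)}
    (hWL : W ≤ L) (hpos : PosOn H W) : Module.finrank ℂ W ≤ posSquares H L :=
  le_csSup (bddAbove_posSet H L) ⟨W, hWL, rfl, hpos⟩

lemma posSquares_le (H : Matrix (Fin N) (Fin N) ℂ) {L : Submodule ℂ (Fin N → ℂ)} {m : ℕ}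
    (h : ∀ W : Submodule ℂ (Fin N → ℂ), W ≤ L → PosOn H W → Module.finrank ℂ W ≤ m) :
    posSquares H L ≤ m := by
  apply csSup_le ⟨0, zero_mem_posSet H L⟩
  rintro d ⟨W, hWL, rfl, hpos⟩
  exact h W hWL hpos

lemma negSquares_eq (H : Matrix (Fin N) (Fin N) ℂ) (L : Submodule ℂ (Fin N → ℂ)) :
    negSquares H L = posSquares (-H) L := by
  unfold negSquares posSquares
  congr 1
  ext d
  refine exists_congr fun W => and_congr_right fun _ => and_congr_right fun _ =>
    forall_congr' fun x => forall_congr' fun _ => forall_congr' fun _ => ?_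
  rw [Jform_neg_mat]
  simp only [Complex.neg_re]
  constructor <;> intro <;> linarith

lemma posOn_inf_eq_bot {H : Matrix (Fin N) (Fin N) ℂ} {W W' : Submodule ℂ (Fin N → ℂ)}
    (hpos : PosOn H W) (hnp : NonposOn H W') : W ⊓ W' = ⊥ := by
  rw [eq_bot_iff]
  intro x hx
  rcases hx with ⟨hxW, hxW'⟩
  by_contra hx0
  rw [Submodule.mem_bot] at hx0
  exact absurd (hnp x hxW') (not_le.mpr (hpos x hxW hx0))

lemma finrank_add_finrank_le {H : Matrix (Fin N) (Fin N) ℂ} {L W W' : Submodule ℂ (Fin N → ℂ)}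
    (hW : W ≤ L) (hW' : W' ≤ L) (hpos : PosOn H W) (hnp : NonposOn H W') :
    Module.finrank ℂ W + Module.finrank ℂ W' ≤ Module.finrank ℂ L := by
  have h := Submodule.finrank_sup_add_finrank_inf_eq W W'
  rw [posOn_inf_eq_bot hpos hnp, finrank_bot, add_zero] at h
  rw [← h]
  exact Submodule.finrank_mono (sup_le hW hW')

lemma posSquares_add_posSquares_neg_le (H : Matrix (Fin N) (Fin N) ℂ)
    (L : Submodule ℂ (Fin N → ℂ)) :
    posSquares H L + posSquares (-H) L ≤ Module.finrank ℂ L := by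
  obtain ⟨W, hWL, hWr, hWpos⟩ := exists_posSquares_witness H L
  obtain ⟨W', hWL', hWr', hWpos'⟩ := exists_posSquares_witness (-H) L
  rw [← hWr, ← hWr']
  exact finrank_add_finrank_le hWL hWL' hWpos hWpos'.neg_nonpos
/-! ### Families that diagonalize the form -/

section Diag

variable (M : Matrix (Fin N) (Fin N) ℂ) {ι : Type*} [Fintype ι] [DecidableEq ι]

/-- Evaluation of the form on a linear combination of a `Jform`-orthogonal family. -/
lemma jform_sum_eval (v : ι → (Fin N → ℂ)) (ev : ι → ℝ)
    (hv : ∀ i j, Jform M (v i) (v j) = if i = j then (ev j : ℂ) else 0) (c : ι → ℂ) :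
    (Jform M (∑ i, c i • v i) (∑ i, c i • v i)).re
      = ∑ i, ev i * Complex.normSq (c i) := by
  classical
  rw [Jform_sum_left]
  have hterm : ∀ i : ι,
      Jform M (c i • v i) (∑ j, c j • v j)
        = ((ev i * Complex.normSq (c i) : ℝ) : ℂ) := by
    intro i
    rw [Jform_smul_left, Jform_sum_right]
    have hj : ∀ j : ι,
        Jform M (v i) (c j • v j) = if j = i then c i * (ev i : ℂ) else 0 := by
      intro j
      rw [Jform_smul_right, hv i j]
      rcases eq_or_ne j i with rfl | hne
      · simp
      · rw [if_neg hne, if_neg (fun h : i = j => hne h.symm), mul_zero]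
    rw [Finset.sum_congr rfl (fun j _ => hj j), Finset.sum_ite_eq' Finset.univ i
      (fun _ => c i * (ev i : ℂ))]
    simp only [Finset.mem_univ, if_true]
    rw [show (starRingEnd ℂ) (c i) * (c i * (ev i : ℂ))
        = ((starRingEnd ℂ) (c i) * c i) * (ev i : ℂ) by ring]
    rw [show (starRingEnd ℂ) (c i) * c i = (Complex.normSq (c i) : ℂ) by
      rw [Complex.normSq_eq_conj_mul_self]]
    push_cast
    ring
  rw [Finset.sum_congr rfl (fun i _ => hterm i), ← Complex.ofReal_sum]
  simp

lemma span_posOn_of_diag (v : ι → (Fin N → ℂ)) (ev : ι → ℝ)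
    (hv : ∀ i j, Jform M (v i) (v j) = if i = j then (ev j : ℂ) else 0)
    (hpos : ∀ i, 0 < ev i) : PosOn M (Submodule.span ℂ (Set.range v)) := by
  intro x hx hx0
  obtain ⟨c, rfl⟩ := (Submodule.mem_span_range_iff_exists_fun ℂ).mp hx
  rw [jform_sum_eval M v ev hv]
  have hc : ∃ i, c i ≠ 0 := by
    by_contra hc
    push_neg at hc
    exact hx0 (by simp [hc])
  obtain ⟨i, hi⟩ := hc
  apply Finset.sum_pos' (fun j _ => mul_nonneg (hpos j).le (Complex.normSq_nonneg _))
  exact ⟨i, Finset.mem_univ i, mul_pos (hpos i) (Complex.normSq_pos.mpr hi)⟩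

lemma span_nonposOn_of_diag (v : ι → (Fin N → ℂ)) (ev : ι → ℝ)
    (hv : ∀ i j, Jform M (v i) (v j) = if i = j then (ev j : ℂ) else 0)
    (hnp : ∀ i, ev i ≤ 0) : NonposOn M (Submodule.span ℂ (Set.range v)) := by
  intro x hx
  obtain ⟨c, rfl⟩ := (Submodule.mem_span_range_iff_exists_fun ℂ).mp hx
  rw [jform_sum_eval M v ev hv]
  exact Finset.sum_nonpos fun j _ =>
    mul_nonpos_of_nonpos_of_nonneg (hnp j) (Complex.normSq_nonneg _)

end Diag

/-! ### Eigen machinery for a Hermitian matrix -/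

section Eigen

variable {K : Matrix (Fin N) (Fin N) ℂ} (hK : K.IsHermitian)

noncomputable def evec (i : Fin N) : Fin N → ℂ :=
  (WithLp.equiv 2 (Fin N → ℂ)) (hK.eigenvectorBasis i)

lemma evec_dot (i j : Fin N) :
    star (evec hK i) ⬝ᵥ evec hK j = if i = j then 1 else 0 := by
  have h := orthonormal_iff_ite.mp hK.eigenvectorBasis.orthonormal i j
  rw [EuclideanSpace.inner_eq_star_dotProduct, dotProduct_comm] at h
  exact h

lemma mulVec_evec (i : Fin N) :
    K *ᵥ evec hK i = (hK.eigenvalues i : ℂ) • evec hK i := by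
  have h := hK.mulVec_eigenvectorBasis i
  rw [evec]
  rw [show ((WithLp.equiv 2 (Fin N → ℂ)) (hK.eigenvectorBasis i) : Fin N → ℂ)
      = ⇑(hK.eigenvectorBasis i) from rfl]
  rw [h]
  ext k
  simp [Complex.real_smul]

lemma evec_jform (i j : Fin N) :
    Jform K (evec hK i) (evec hK j) =
      if i = j then (hK.eigenvalues j : ℂ) else 0 := by
  rw [Jform, mulVec_evec, star_smul, smul_dotProduct, evec_dot]
  rcases eq_or_ne i j with rfl | hij
  · simp [Complex.conj_ofReal]
  · simp [hij]

lemma evec_indep : LinearIndependent ℂ (evec hK) :=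
  hK.eigenvectorBasis.orthonormal.linearIndependent.map'
    (WithLp.linearEquiv 2 ℂ (Fin N → ℂ)).toLinearMap (LinearEquiv.ker _)

lemma evec_ne_zero (i : Fin N) : evec hK i ≠ 0 :=
  (evec_indep hK).ne_zero i

variable (p : Fin N → Prop) [DecidablePred p]

noncomputable def spanEv : Submodule ℂ (Fin N → ℂ) :=
  Submodule.span ℂ (Set.range (fun i : {i // p i} => evec hK i))

lemma evec_sub_jform (i j : {i // p i}) :
    Jform K (evec hK i.1) (evec hK j.1)
      = if i = j then (hK.eigenvalues j.1 : ℂ) else 0 := by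
  rw [evec_jform]
  rcases eq_or_ne i j with rfl | hne
  · simp
  · simp [hne, (Subtype.coe_injective.ne_iff).mpr hne]

lemma finrank_spanEv :
    Module.finrank ℂ (spanEv hK p) = Fintype.card {i // p i} :=
  finrank_span_eq_card ((evec_indep hK).comp Subtype.val Subtype.val_injective)

lemma spanEv_posOn (h : ∀ i, p i → 0 < hK.eigenvalues i) : PosOn K (spanEv hK p) :=
  span_posOn_of_diag K _ (fun i : {i // p i} => hK.eigenvalues i.1)
    (evec_sub_jform hK p) (fun i => h i.1 i.2)

lemma spanEv_nonposOn (h : ∀ i, p i → hK.eigenvalues i ≤ 0) : NonposOn K (spanEv hK p) :=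
  span_nonposOn_of_diag K _ (fun i : {i // p i} => hK.eigenvalues i.1)
    (evec_sub_jform hK p) (fun i => h i.1 i.2)

lemma spanEv_neg_nonposOn (h : ∀ i, p i → 0 ≤ hK.eigenvalues i) :
    NonposOn (-K) (spanEv hK p) := by
  apply span_nonposOn_of_diag (-K) _ (fun i : {i // p i} => -hK.eigenvalues i.1)
    (fun i j => ?_) (fun i => neg_nonpos.mpr (h i.1 i.2))
  rw [Jform_neg_mat, evec_sub_jform hK p]
  rcases eq_or_ne i j with rfl | hne
  · simp
  · simp [hne]

end Eigen

/-! ### Counting at ⊤ for Hermitian matrices -/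

section Count

open Module

variable {K : Matrix (Fin N) (Fin N) ℂ} (hK : K.IsHermitian)

lemma card_pos_add_card_not_pos (p : Fin N → Prop) [DecidablePred p] :
    Fintype.card {i // p i} + Fintype.card {i // ¬ p i} = N := by
  rw [Fintype.card_subtype, Fintype.card_subtype]
  rw [Finset.card_filter_add_card_filter_not]
  simp

lemma card_pos_le_posSquares_top :
    Fintype.card {i // 0 < hK.eigenvalues i} ≤ posSquares K ⊤ := by
  have h := le_posSquares K (L := ⊤) le_top
    (spanEv_posOn hK (fun i => 0 < hK.eigenvalues i) (fun _ hi => hi))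
  rwa [finrank_spanEv] at h

lemma posSquares_top_le_card_pos :
    posSquares K ⊤ ≤ Fintype.card {i // 0 < hK.eigenvalues i} := by
  apply posSquares_le
  intro W _ hpos
  have h := finrank_add_finrank_le (L := ⊤) le_top le_top hpos
    (spanEv_nonposOn hK (fun i => ¬ 0 < hK.eigenvalues i) (fun _ hi => not_lt.mp hi))
  rw [finrank_spanEv, finrank_top, finrank_ambient] at h
  have hc := card_pos_add_card_not_pos (N := N) (fun i => 0 < hK.eigenvalues i)
  omega

lemma posSquares_neg_top_le_card_neg :
    posSquares (-K) ⊤ ≤ Fintype.card {i // hK.eigenvalues i < 0} := by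
  apply posSquares_le
  intro W _ hpos
  have h := finrank_add_finrank_le (L := ⊤) le_top le_top hpos
    (spanEv_neg_nonposOn hK (fun i => 0 ≤ hK.eigenvalues i) (fun _ hi => hi))
  rw [finrank_spanEv, finrank_top, finrank_ambient] at h
  have hc := card_pos_add_card_not_pos (N := N) (fun i => 0 ≤ hK.eigenvalues i)
  have hcc : Fintype.card {i // ¬ 0 ≤ hK.eigenvalues i}
      = Fintype.card {i // hK.eigenvalues i < 0} := by
    apply Fintype.card_congr
    exact Equiv.subtypeEquivRight fun i => not_le
  omega

/-- Perturbation bound for positive squares at ⊤. -/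
lemma posSquares_perturb {K₁ K₂ : Matrix (Fin N) (Fin N) ℂ}
    (hK₁ : K₁.IsHermitian) (hK₂ : K₂.IsHermitian) :
    posSquares K₂ ⊤ ≤ posSquares K₁ ⊤ + posSquares (K₂ - K₁) ⊤ := by
  classical
  have hR : (K₂ - K₁).IsHermitian := hK₂.sub hK₁
  obtain ⟨W, -, hWr, hWpos⟩ := exists_posSquares_witness K₂ ⊤
  set P₁ := spanEv hK₁ (fun i => ¬ 0 < hK₁.eigenvalues i) with hP₁
  set PR := spanEv hR (fun i => ¬ 0 < hR.eigenvalues i) with hPR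
  have hP₁np : NonposOn K₁ P₁ := spanEv_nonposOn hK₁ _ (fun _ hi => not_lt.mp hi)
  have hPRnp : NonposOn (K₂ - K₁) PR := spanEv_nonposOn hR _ (fun _ hi => not_lt.mp hi)
  have hPnp : NonposOn K₂ (P₁ ⊓ PR) := by
    intro x hx
    have h1 := hP₁np x hx.1
    have h2 := hPRnp x hx.2
    have : Jform (K₂ - K₁) x x = Jform K₂ x x - Jform K₁ x x := Jform_sub_mat _ _ _ _
    have hre : (Jform (K₂ - K₁) x x).re = (Jform K₂ x x).re - (Jform K₁ x x).re := by
      rw [this, Complex.sub_re]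
    linarith
  have h1 : Module.finrank ℂ W + Module.finrank ℂ (P₁ ⊓ PR : Submodule ℂ (Fin N → ℂ)) ≤ N := by
    have := finrank_add_finrank_le (L := ⊤) le_top le_top hWpos hPnp
    rwa [finrank_top, finrank_ambient] at this
  have h2 := Submodule.finrank_sup_add_finrank_inf_eq P₁ PR
  have h3 : Module.finrank ℂ (P₁ ⊔ PR : Submodule ℂ (Fin N → ℂ)) ≤ N := by
    have := Submodule.finrank_le (P₁ ⊔ PR)
    rwa [finrank_ambient] at this
  have h4 : Module.finrank ℂ P₁ + posSquares K₁ ⊤ ≥ N := by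
    have := card_pos_le_posSquares_top hK₁
    have hc := card_pos_add_card_not_pos (N := N) (fun i => 0 < hK₁.eigenvalues i)
    rw [hP₁, finrank_spanEv]
    omega
  have h5 : Module.finrank ℂ PR + posSquares (K₂ - K₁) ⊤ ≥ N := by
    have := card_pos_le_posSquares_top hR
    have hc := card_pos_add_card_not_pos (N := N) (fun i => 0 < hR.eigenvalues i)
    rw [hPR, finrank_spanEv]
    omega
  omega

/-- The total number of positive and negative squares of a Hermitian form is at most its rank. -/
lemma posSquares_add_neg_le_rank (hK : K.IsHermitian) :
    posSquares K ⊤ + posSquares (-K) ⊤ ≤ K.rank := by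
  classical
  have h1 := posSquares_top_le_card_pos hK
  have h2 := posSquares_neg_top_le_card_neg hK
  have h3 : Fintype.card {i // 0 < hK.eigenvalues i} + Fintype.card {i // hK.eigenvalues i < 0}
      ≤ Fintype.card {i // hK.eigenvalues i ≠ 0} := by
    rw [Fintype.card_subtype, Fintype.card_subtype, Fintype.card_subtype]
    rw [← Finset.card_union_of_disjoint]
    · apply Finset.card_le_card
      intro i hi
      simp only [Finset.mem_union, Finset.mem_filter] at hi ⊢
      rcases hi with h | h
      · exact ⟨h.1, ne_of_gt h.2⟩
      · exact ⟨h.1, ne_of_lt h.2⟩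
    · rw [Finset.disjoint_filter]
      intro i _ hpos
      exact not_lt.mpr hpos.le
  rw [hK.rank_eq_card_non_zero_eigs]
  omega

end Count
/-! ### Spectral subspaces of a J-selfadjoint matrix -/

section Spectral

/-- The eigenspace of `A` (as an endomorphism) at a real number `μ`. -/
noncomputable def ES (A : Matrix (Fin N) (Fin N) ℂ) (μ : ℝ) : Submodule ℂ (Fin N → ℂ) :=
  Module.End.eigenspace (Matrix.toLin' A) (μ : ℂ)

lemma mem_ES {A : Matrix (Fin N) (Fin N) ℂ} {μ : ℝ} {x : Fin N → ℂ} :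
    x ∈ ES A μ ↔ A *ᵥ x = (μ : ℂ) • x := by
  rw [ES, Module.End.mem_eigenspace_iff, Matrix.toLin'_apply]

variable {J A : Matrix (Fin N) (Fin N) ℂ}

lemma jform_A_move (hAc : J * A = Aᴴ * J) (x y : Fin N → ℂ) :
    Jform J (A *ᵥ x) y = Jform J x (A *ᵥ y) := by
  have h1 : J *ᵥ (A *ᵥ x) = Aᴴ *ᵥ (J *ᵥ x) := by
    rw [mulVec_mulVec, mulVec_mulVec, hAc]
  rw [Jform, Jform, h1, star_mulVec, conjTranspose_conjTranspose, ← dotProduct_mulVec]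

lemma jform_eigen_smul (hAc : J * A = Aᴴ * J) {μ : ℝ} {x : Fin N → ℂ}
    (hx : x ∈ ES A μ) (α β : ℝ) (y : Fin N → ℂ) :
    Jform ((α : ℂ) • J + (β : ℂ) • (J * A)) x y = ((α + β * μ : ℝ) : ℂ) * Jform J x y := by
  have h2 : Jform J (A *ᵥ x) y = (μ : ℂ) * Jform J x y := by
    rw [mem_ES.mp hx, Jform_smul_left, Complex.conj_ofReal]
  rw [Jform_add_mat, Jform_smul_mat, Jform_smul_mat, Jform_mul_mat, h2,
    Complex.conj_ofReal, Complex.conj_ofReal]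
  push_cast
  ring

lemma es_orth (hAc : J * A = Aᴴ * J) {μ ν : ℝ} (hne : μ ≠ ν) {x y : Fin N → ℂ}
    (hx : x ∈ ES A μ) (hy : y ∈ ES A ν) : Jform J x y = 0 := by
  have h1 : (μ : ℂ) * Jform J x y = (ν : ℂ) * Jform J x y := by
    calc (μ : ℂ) * Jform J x y = Jform J (A *ᵥ x) y := by
          rw [mem_ES.mp hx, Jform_smul_left, Complex.conj_ofReal]
      _ = Jform J x (A *ᵥ y) := jform_A_move hAc x y
      _ = (ν : ℂ) * Jform J x y := by rw [mem_ES.mp hy, Jform_smul_right]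
  by_contra h0
  have := mul_right_cancel₀ h0 h1
  exact hne (Complex.ofReal_injective this)

lemma es_orth_comb (hAc : J * A = Aᴴ * J) (α β : ℝ) {μ ν : ℝ} (hne : μ ≠ ν)
    {x y : Fin N → ℂ} (hx : x ∈ ES A μ) (hy : y ∈ ES A ν) :
    Jform ((α : ℂ) • J + (β : ℂ) • (J * A)) x y = 0 := by
  rw [jform_eigen_smul hAc hx α β y, es_orth hAc hne hx hy, mul_zero]

lemma es_iSupIndep : iSupIndep (fun μ : ℝ => ES A μ) :=
  (Module.End.eigenspaces_iSupIndep (Matrix.toLin' A)).comp Complex.ofReal_injective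

end Spectral
section Support

variable {A : Matrix (Fin N) (Fin N) ℂ}

lemma spectrum_toLin' : spectrum ℂ (Matrix.toLin' A) = spectrum ℂ A := by
  have h : Matrix.toLin' A = Matrix.toLinAlgEquiv' A := by
    apply LinearMap.ext
    intro v
    rw [Matrix.toLin'_apply, Matrix.toLinAlgEquiv'_apply]
  rw [h]
  exact AlgEquiv.spectrum_eq Matrix.toLinAlgEquiv' A

lemma hasEigen_mem_spec {z : ℂ} (h : Module.End.HasEigenvalue (Matrix.toLin' A) z) :
    z ∈ spectrum ℂ A := by
  rw [← spectrum_toLin']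
  exact Module.End.hasEigenvalue_iff_mem_spectrum.mp h

lemma es_support_finite : {μ : ℝ | ES A μ ≠ ⊥}.Finite := by
  apply Set.Finite.subset ((Matrix.finite_spectrum A).preimage
    (Set.injOn_of_injective Complex.ofReal_injective))
  intro μ hμ
  exact hasEigen_mem_spec (Module.End.hasEigenvalue_iff.mpr hμ)

/-- The (finite) set of real eigenvalues of `A`. -/
noncomputable def SuppF (A : Matrix (Fin N) (Fin N) ℂ) : Finset ℝ :=
  (es_support_finite (A := A)).toFinset

lemma mem_SuppF {μ : ℝ} : μ ∈ SuppF A ↔ ES A μ ≠ ⊥ := Set.Finite.mem_toFinset _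

lemma es_eq_bot_of_not_mem {μ : ℝ} (h : μ ∉ SuppF A) : ES A μ = ⊥ := by
  by_contra hne
  exact h (mem_SuppF.mpr hne)

lemma es_ne_of_mem {μ l : ℝ} (h : μ ∈ SuppF A) (hl : l ∉ SuppF A) : μ ≠ l := by
  rintro rfl
  exact hl h

lemma es_top (hd : Diagonalizable A) (hr : spectrum ℂ A ⊆ Set.range Complex.ofReal) :
    (⨆ μ ∈ SuppF A, ES A μ) = ⊤ := by
  classical
  rw [eq_top_iff]
  have hall : ∀ x : Fin N → ℂ, x ∈ ⨆ μ : ℝ, ES A μ := by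
    obtain ⟨P, D, hP, hD, hAPD⟩ := hd
    have hAP : A * P = P * D := by
      rw [hAPD, Matrix.mul_assoc, Matrix.mul_assoc, Matrix.nonsing_inv_mul P hP,
        Matrix.mul_one]
    -- columns of P are eigenvectors
    have hcol : ∀ i, A *ᵥ (fun k => P k i) = D i i • (fun k => P k i) := by
      intro i
      funext k
      have h1 : (A * P) k i = (P * D) k i := by rw [hAP]
      rw [Matrix.mul_apply, Matrix.mul_apply] at h1
      have h2 : ∑ j, P k j * D j i = P k i * D i i := by
        apply Finset.sum_eq_single i
        · intro j _ hji
          rw [hD (hji), mul_zero]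
        · intro h; exact absurd (Finset.mem_univ i) h
      simpa [Matrix.mulVec, dotProduct, h2, mul_comm] using h1
    have hcolmem : ∀ i, (fun k => P k i) ∈ ⨆ μ : ℝ, ES A μ := by
      intro i
      by_cases hc0 : (fun k => P k i) = 0
      · rw [hc0]; exact Submodule.zero_mem _
      · have heig : Module.End.HasEigenvalue (Matrix.toLin' A) (D i i) := by
          apply Module.End.hasEigenvalue_of_hasEigenvector
          refine ⟨?_, hc0⟩
          rw [Module.End.mem_eigenspace_iff, Matrix.toLin'_apply]
          exact hcol i
        obtain ⟨μ, hμ⟩ := hr (hasEigen_mem_spec heig)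
        apply Submodule.mem_iSup_of_mem μ
        rw [mem_ES, hcol i, ← hμ]
      -- done
    intro x
    have hx : x = P *ᵥ (P⁻¹ *ᵥ x) := by
      rw [Matrix.mulVec_mulVec, Matrix.mul_nonsing_inv P hP, Matrix.one_mulVec]
    have hsum : P *ᵥ (P⁻¹ *ᵥ x) = ∑ i, (P⁻¹ *ᵥ x) i • (fun k => P k i) := by
      funext k
      simp only [Matrix.mulVec, dotProduct, Finset.sum_apply, Pi.smul_apply,
        smul_eq_mul]
      exact Finset.sum_congr rfl fun i _ => mul_comm _ _
    rw [hx, hsum]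
    exact Submodule.sum_mem _ fun i _ => Submodule.smul_mem _ _ (hcolmem i)
  intro x _
  have hx := hall x
  have hle : (⨆ μ : ℝ, ES A μ) ≤ ⨆ μ ∈ SuppF A, ES A μ := by
    apply iSup_le
    intro μ
    by_cases hμ : μ ∈ SuppF A
    · exact le_iSup₂_of_le μ hμ le_rfl
    · rw [es_eq_bot_of_not_mem hμ]; exact bot_le
  exact hle hx

end Support
section BiSup

variable {A : Matrix (Fin N) (Fin N) ℂ}

lemma biSup_coe_eq (T : Finset ℝ) (W : ℝ → Submodule ℂ (Fin N → ℂ)) :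
    (⨆ μ ∈ (T : Set ℝ), W μ) = ⨆ μ ∈ T, W μ := by
  simp [Finset.mem_coe]

lemma jform_zero_on_biSup (M : Matrix (Fin N) (Fin N) ℂ) (T : Finset ℝ)
    (W : ℝ → Submodule ℂ (Fin N → ℂ)) {x : Fin N → ℂ}
    (h : ∀ ν ∈ T, ∀ y ∈ W ν, Jform M x y = 0) :
    ∀ z ∈ (⨆ ν ∈ T, W ν : Submodule ℂ (Fin N → ℂ)), Jform M x z = 0 := by
  intro z hz
  rw [iSup_subtype'] at hz
  refine Submodule.iSup_induction _ (motive := fun z => Jform M x z = 0) hz ?_ ?_ ?_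
  · rintro ⟨ν, hν⟩ y hy
    exact h ν hν y hy
  · exact Jform_zero_right M x
  · intro a b ha hb
    rw [Jform_add_right, ha, hb, add_zero]

lemma finrank_biSup_es (T : Finset ℝ) (W : ℝ → Submodule ℂ (Fin N → ℂ))
    (hW : ∀ μ ∈ T, W μ ≤ ES A μ) :
    Module.finrank ℂ (⨆ μ ∈ T, W μ : Submodule ℂ (Fin N → ℂ))
      = ∑ μ ∈ T, Module.finrank ℂ (W μ) := by
  classical
  induction T using Finset.induction with
  | empty => simp
  | @insert ν T hν ih =>
    rw [Finset.iSup_insert, Finset.sum_insert hν]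
    have hdis : Disjoint (W ν) (⨆ μ ∈ T, W μ : Submodule ℂ (Fin N → ℂ)) := by
      have h1 : Disjoint (ES A ν) (⨆ μ ∈ (T : Set ℝ), ES A μ) :=
        (es_iSupIndep (A := A)).disjoint_biSup (by simpa using hν)
      rw [biSup_coe_eq] at h1
      exact h1.mono (hW ν (Finset.mem_insert_self ν T))
        (iSup₂_mono fun μ hμ => hW μ (Finset.mem_insert_of_mem hμ))
    have h2 := Submodule.finrank_sup_add_finrank_inf_eq (W ν)
      (⨆ μ ∈ T, W μ : Submodule ℂ (Fin N → ℂ))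
    rw [disjoint_iff.mp hdis, finrank_bot, add_zero] at h2
    rw [h2, ih (fun μ hμ => hW μ (Finset.mem_insert_of_mem hμ))]

lemma posOn_biSup {M : Matrix (Fin N) (Fin N) ℂ} (hM : M.IsHermitian)
    (horth : ∀ (μ ν : ℝ), μ ≠ ν → ∀ x ∈ ES A μ, ∀ y ∈ ES A ν, Jform M x y = 0)
    (T : Finset ℝ) (W : ℝ → Submodule ℂ (Fin N → ℂ))
    (hW : ∀ μ ∈ T, W μ ≤ ES A μ) (hpos : ∀ μ ∈ T, PosOn M (W μ)) :
    PosOn M (⨆ μ ∈ T, W μ : Submodule ℂ (Fin N → ℂ)) := by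
  classical
  induction T using Finset.induction with
  | empty =>
    intro x hx hx0
    simp only [Finset.notMem_empty, iSup_false, iSup_bot, Submodule.mem_bot] at hx
    exact absurd hx hx0
  | @insert ν T hν ih =>
    intro x hx hx0
    rw [Finset.iSup_insert] at hx
    obtain ⟨w, hw, z, hz, rfl⟩ := Submodule.mem_sup.mp hx
    have hwz : Jform M w z = 0 := by
      apply jform_zero_on_biSup M T W _ z hz
      intro ρ hρ y hy
      exact horth ν ρ (fun h => hν (h ▸ hρ)) w (hW ν (Finset.mem_insert_self ν T) hw)
        y (hW ρ (Finset.mem_insert_of_mem hρ) hy)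
    have hzw : Jform M z w = 0 := by
      rw [Jform_conj M hM, hwz, map_zero]
    have hval : (Jform M (w + z) (w + z)).re = (Jform M w w).re + (Jform M z z).re := by
      rw [Jform_add_left, Jform_add_right, Jform_add_right, hwz, hzw]
      simp [Complex.add_re]
    rw [hval]
    have hWpos := hpos ν (Finset.mem_insert_self ν T)
    have hTpos : PosOn M (⨆ μ ∈ T, W μ : Submodule ℂ (Fin N → ℂ)) :=
      ih (fun μ hμ => hW μ (Finset.mem_insert_of_mem hμ))
        (fun μ hμ => hpos μ (Finset.mem_insert_of_mem hμ))
    by_cases hw0 : w = 0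
    · have hz0 : z ≠ 0 := by
        intro h
        exact hx0 (by rw [hw0, h, add_zero])
      have := hTpos z hz hz0
      have hww : (Jform M w w).re = 0 := by rw [hw0, Jform_zero_left]; rfl
      linarith
    · have h1 := hWpos w hw hw0
      by_cases hz0 : z = 0
      · have hzz : (Jform M z z).re = 0 := by rw [hz0, Jform_zero_left]; rfl
        linarith
      · have h2 := hTpos z hz hz0
        linarith

lemma sum_le_posSquares {M : Matrix (Fin N) (Fin N) ℂ} (hM : M.IsHermitian)
    (horth : ∀ (μ ν : ℝ), μ ≠ ν → ∀ x ∈ ES A μ, ∀ y ∈ ES A ν, Jform M x y = 0)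
    (T : Finset ℝ) (W : ℝ → Submodule ℂ (Fin N → ℂ))
    (hW : ∀ μ ∈ T, W μ ≤ ES A μ) {L : Submodule ℂ (Fin N → ℂ)}
    (hsub : ∀ μ ∈ T, W μ ≤ L) (hpos : ∀ μ ∈ T, PosOn M (W μ)) :
    ∑ μ ∈ T, Module.finrank ℂ (W μ) ≤ posSquares M L := by
  rw [← finrank_biSup_es T W hW]
  exact le_posSquares M (iSup₂_le hsub) (posOn_biSup hM horth T W hW hpos)

end BiSup
section Nondeg

variable {J A : Matrix (Fin N) (Fin N) ℂ}

lemma card_add_card_not {ι : Type*} [Fintype ι] (p : ι → Prop) [DecidablePred p] :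
    Fintype.card {i // p i} + Fintype.card {i // ¬ p i} = Fintype.card ι := by
  rw [Fintype.card_subtype, Fintype.card_subtype,
    Finset.card_filter_add_card_filter_not, Finset.card_univ]

lemma es_nondeg (hJinv : IsUnit J.det) (hJ : J.IsHermitian) (hAc : J * A = Aᴴ * J)
    (hd : Diagonalizable A) (hr : spectrum ℂ A ⊆ Set.range Complex.ofReal)
    {μ : ℝ} {x : Fin N → ℂ} (hx : x ∈ ES A μ)
    (h : ∀ y ∈ ES A μ, Jform J x y = 0) : x = 0 := by
  have hz : ∀ z ∈ (⊤ : Submodule ℂ (Fin N → ℂ)), Jform J x z = 0 := by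
    rw [← es_top hd hr]
    apply jform_zero_on_biSup J (SuppF A) (ES A)
    intro ν hν y hy
    rcases eq_or_ne μ ν with rfl | hne
    · exact h y hy
    · exact es_orth hAc hne hx hy
  have hJx : star (J *ᵥ x) = 0 := by
    funext k
    have hk := hz (Pi.single k 1) Submodule.mem_top
    rw [Jform, dotProduct_single] at hk
    simpa using hk
  have hJx0 : J *ᵥ x = 0 := by
    have := congrArg star hJx
    simpa using this
  have hinj : Function.Injective J.mulVec :=
    Matrix.mulVec_injective_iff_isUnit.mpr ((Matrix.isUnit_iff_isUnit_det J).mpr hJinv)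
  apply hinj
  simpa using hJx0

lemma pq_eq_finrank (hJinv : IsUnit J.det) (hJ : J.IsHermitian) (hAc : J * A = Aᴴ * J)
    (hd : Diagonalizable A) (hr : spectrum ℂ A ⊆ Set.range Complex.ofReal) (μ : ℝ) :
    posSquares J (ES A μ) + posSquares (-J) (ES A μ)
      = Module.finrank ℂ (ES A μ) := by
  classical
  refine le_antisymm (posSquares_add_posSquares_neg_le J _) ?_
  set L := ES A μ with hLdef
  set d := Module.finrank ℂ L with hddef
  let b : Module.Basis (Fin d) ℂ L := Module.finBasis ℂ L
  set b' : Fin d → (Fin N → ℂ) := fun i => (b i : Fin N → ℂ) with hb'def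
  have hb'indep : LinearIndependent ℂ b' :=
    b.linearIndependent.map' L.subtype (Submodule.ker_subtype L)
  have hb'mem : ∀ i, b' i ∈ L := fun i => (b i).2
  have hb'span : ∀ x ∈ L, ∃ a : Fin d → ℂ, ∑ i, a i • b' i = x := by
    intro x hx
    have h1 : Submodule.span ℂ (Set.range b') = L := by
      have h2 : Set.range b' = L.subtype '' Set.range b := by
        rw [← Set.range_comp]
        rfl
      rw [h2, ← Submodule.map_span, b.span_eq, Submodule.map_top, Submodule.range_subtype]
    exact (Submodule.mem_span_range_iff_exists_fun ℂ).mp (h1 ▸ hx)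
  set G : Matrix (Fin d) (Fin d) ℂ := Matrix.of (fun i j => Jform J (b' i) (b' j)) with hGdef
  have hG : G.IsHermitian := by
    ext i j
    rw [Matrix.conjTranspose_apply]
    show star (Jform J (b' j) (b' i)) = Jform J (b' i) (b' j)
    exact (Jform_conj J hJ (b' j) (b' i)).symm
  have hGb' : ∀ (i : Fin d) (w : Fin d → ℂ),
      Jform J (b' i) (∑ i', w i' • b' i') = (G *ᵥ w) i := by
    intro i w
    rw [Jform_sum_right]
    simp only [Jform_smul_right]
    simp [Matrix.mulVec, dotProduct, hGdef, mul_comm]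
  set c : Fin d → (Fin d → ℂ) := evec hG with hcdef
  set v : Fin d → (Fin N → ℂ) := fun j => ∑ i, (c j) i • b' i with hvdef
  have hvmem : ∀ j, v j ∈ L := fun j => Submodule.sum_mem _ fun i _ =>
    Submodule.smul_mem _ _ (hb'mem i)
  have hvform : ∀ j k, Jform J (v j) (v k)
      = if j = k then (hG.eigenvalues k : ℂ) else 0 := by
    intro j k
    rw [hvdef]
    simp only
    rw [Jform_sum_left]
    simp only [Jform_smul_left]
    have hrw : ∀ i : Fin d, Jform J (b' i) (∑ i', (c k) i' • b' i') = (G *ᵥ c k) i :=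
      fun i => hGb' i (c k)
    calc ∑ i, (starRingEnd ℂ) (c j i) * Jform J (b' i) (∑ i', (c k) i' • b' i')
        = ∑ i, (starRingEnd ℂ) (c j i) * ((hG.eigenvalues k : ℂ) * (c k i)) := by
          apply Finset.sum_congr rfl
          intro i _
          rw [hrw i, hcdef, mulVec_evec hG k]
          simp
      _ = (hG.eigenvalues k : ℂ) * (star (c j) ⬝ᵥ c k) := by
          rw [dotProduct, Finset.mul_sum]
          apply Finset.sum_congr rfl
          intro i _
          simp only [Pi.star_apply, RCLike.star_def]
          ring
      _ = if j = k then (hG.eigenvalues k : ℂ) else 0 := by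
          rw [hcdef, evec_dot hG j k]
          rcases eq_or_ne j k with rfl | hne
          · simp
          · simp [hne]
  have hGev : ∀ j, hG.eigenvalues j ≠ 0 := by
    intro j hev
    have hGc : G *ᵥ c j = 0 := by
      rw [hcdef, mulVec_evec hG j, hev]
      simp
    have hyL : v j ∈ L := hvmem j
    have hyzero : ∀ x ∈ L, Jform J x (v j) = 0 := by
      intro x hx
      obtain ⟨a, rfl⟩ := hb'span x hx
      rw [Jform_sum_left]
      apply Finset.sum_eq_zero
      intro i _
      rw [Jform_smul_left, hvdef]
      simp only
      rw [hGb' i (c j), hGc]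
      simp
    have hy0 : v j = 0 := by
      apply es_nondeg hJinv hJ hAc hd hr hyL
      intro y hy
      rw [Jform_conj J hJ, hyzero y hy, map_zero]
    have hcj : c j = 0 := by
      have := Fintype.linearIndependent_iff.mp hb'indep (c j) hy0
      funext i
      exact this i
    exact evec_ne_zero hG j (hcdef ▸ hcj)
  have hvindep : LinearIndependent ℂ v := by
    set φ : (Fin d → ℂ) →ₗ[ℂ] (Fin N → ℂ) := Fintype.linearCombination ℂ b' with hφdef
    have hker : LinearMap.ker φ = ⊥ := by
      apply LinearMap.ker_eq_bot'.mpr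
      intro w hw
      rw [hφdef, Fintype.linearCombination_apply] at hw
      funext i
      exact Fintype.linearIndependent_iff.mp hb'indep w hw i
    have hcomp : v = φ ∘ c := by
      funext j
      rw [hvdef, Function.comp_apply, hφdef, Fintype.linearCombination_apply]
    rw [hcomp]
    exact ((evec_indep hG).map' φ hker)
  -- positive part
  have hpos : Fintype.card {j // 0 < hG.eigenvalues j} ≤ posSquares J L := by
    set vp : {j // 0 < hG.eigenvalues j} → (Fin N → ℂ) := fun j => v j.1 with hvpdef
    have hdiag : ∀ i j, Jform J (vp i) (vp j)
        = if i = j then (hG.eigenvalues j.1 : ℂ) else 0 := by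
      intro i j
      rw [hvpdef]
      simp only
      rw [hvform i.1 j.1]
      rcases eq_or_ne i j with rfl | hne
      · simp
      · simp [hne, (Subtype.coe_injective.ne_iff).mpr hne]
    have hWle : Submodule.span ℂ (Set.range vp) ≤ L := by
      rw [Submodule.span_le]
      rintro - ⟨j, rfl⟩
      exact hvmem j.1
    have hfr : Module.finrank ℂ (Submodule.span ℂ (Set.range vp))
        = Fintype.card {j // 0 < hG.eigenvalues j} :=
      finrank_span_eq_card (hvindep.comp Subtype.val Subtype.val_injective)
    have := le_posSquares J hWle
      (span_posOn_of_diag J vp (fun j => hG.eigenvalues j.1) hdiag (fun j => j.2))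
    rwa [hfr] at this
  -- negative part
  have hneg : Fintype.card {j // hG.eigenvalues j < 0} ≤ posSquares (-J) L := by
    set vn : {j // hG.eigenvalues j < 0} → (Fin N → ℂ) := fun j => v j.1 with hvndef
    have hdiag : ∀ i j, Jform (-J) (vn i) (vn j)
        = if i = j then ((-hG.eigenvalues j.1 : ℝ) : ℂ) else 0 := by
      intro i j
      rw [hvndef]
      simp only
      rw [Jform_neg_mat, hvform i.1 j.1]
      rcases eq_or_ne i j with rfl | hne
      · simp
      · simp [hne, (Subtype.coe_injective.ne_iff).mpr hne]
    have hWle : Submodule.span ℂ (Set.range vn) ≤ L := by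
      rw [Submodule.span_le]
      rintro - ⟨j, rfl⟩
      exact hvmem j.1
    have hfr : Module.finrank ℂ (Submodule.span ℂ (Set.range vn))
        = Fintype.card {j // hG.eigenvalues j < 0} :=
      finrank_span_eq_card (hvindep.comp Subtype.val Subtype.val_injective)
    have := le_posSquares (-J) hWle
      (span_posOn_of_diag (-J) vn (fun j => -hG.eigenvalues j.1) hdiag
        (fun j => neg_pos.mpr j.2))
    rwa [hfr] at this
  -- card arithmetic
  have hcard : Fintype.card {j // 0 < hG.eigenvalues j}
      + Fintype.card {j // hG.eigenvalues j < 0} = d := by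
    have h1 := card_add_card_not (fun j : Fin d => 0 < hG.eigenvalues j)
    have h2 : Fintype.card {j // ¬ 0 < hG.eigenvalues j}
        = Fintype.card {j // hG.eigenvalues j < 0} := by
      apply Fintype.card_congr
      apply Equiv.subtypeEquivRight
      intro j
      constructor
      · intro h
        exact lt_of_le_of_ne (not_lt.mp h) (hGev j)
      · intro h
        exact not_lt.mpr h.le
    rw [h2] at h1
    simpa using h1
  omega

end Nondeg
section Steps

variable {J A : Matrix (Fin N) (Fin N) ℂ}

lemma comb_herm (hJ : J.IsHermitian) (hAc : J * A = Aᴴ * J) (α β : ℝ) :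
    ((α : ℂ) • J + (β : ℂ) • (J * A)).IsHermitian := by
  have hJA : (J * A).IsHermitian := by
    show (J * A)ᴴ = J * A
    rw [Matrix.conjTranspose_mul, hJ.eq, ← hAc]
  show _ = _
  rw [Matrix.conjTranspose_add, Matrix.conjTranspose_smul, Matrix.conjTranspose_smul,
    hJ.eq, hJA.eq]
  simp [Complex.conj_ofReal]

lemma Kn_eq (l : ℝ) : (l : ℂ) • J - J * A = ((l : ℝ) : ℂ) • J + ((-1 : ℝ) : ℂ) • (J * A) := by
  rw [show ((-1 : ℝ) : ℂ) = -1 by norm_num, neg_one_smul, sub_eq_add_neg]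

lemma Kp_eq (l : ℝ) : J * A - (l : ℂ) • J = ((-l : ℝ) : ℂ) • J + ((1 : ℝ) : ℂ) • (J * A) := by
  rw [show ((-l : ℝ) : ℂ) = -(l : ℂ) by push_cast; ring, neg_smul, Complex.ofReal_one, one_smul]
  abel

lemma Kn_herm (hJ : J.IsHermitian) (hAc : J * A = Aᴴ * J) (l : ℝ) :
    ((l : ℂ) • J - J * A).IsHermitian := by
  rw [Kn_eq]
  exact comb_herm hJ hAc l (-1)

lemma Kp_herm (hJ : J.IsHermitian) (hAc : J * A = Aᴴ * J) (l : ℝ) :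
    (J * A - (l : ℂ) • J).IsHermitian := by
  rw [Kp_eq]
  exact comb_herm hJ hAc (-l) 1

lemma Kn_orth (hAc : J * A = Aᴴ * J) (l : ℝ) :
    ∀ (μ ν : ℝ), μ ≠ ν → ∀ x ∈ ES A μ, ∀ y ∈ ES A ν,
      Jform ((l : ℂ) • J - J * A) x y = 0 := by
  intro μ ν hne x hx y hy
  rw [Kn_eq]
  exact es_orth_comb hAc l (-1) hne hx hy

lemma Kp_orth (hAc : J * A = Aᴴ * J) (l : ℝ) :
    ∀ (μ ν : ℝ), μ ≠ ν → ∀ x ∈ ES A μ, ∀ y ∈ ES A ν,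
      Jform (J * A - (l : ℂ) • J) x y = 0 := by
  intro μ ν hne x hx y hy
  rw [Kp_eq]
  exact es_orth_comb hAc (-l) 1 hne hx hy

lemma Kn_eigen_val (hAc : J * A = Aᴴ * J) {μ : ℝ} {x : Fin N → ℂ} (hx : x ∈ ES A μ) (l : ℝ) :
    (Jform ((l : ℂ) • J - J * A) x x).re = (l - μ) * (Jform J x x).re := by
  rw [Kn_eq, jform_eigen_smul hAc hx l (-1)]
  rw [show (l + (-1) * μ : ℝ) = l - μ by ring]
  rw [Complex.re_ofReal_mul]

lemma Kp_eigen_val (hAc : J * A = Aᴴ * J) {μ : ℝ} {x : Fin N → ℂ} (hx : x ∈ ES A μ) (l : ℝ) :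
    (Jform (J * A - (l : ℂ) • J) x x).re = (μ - l) * (Jform J x x).re := by
  rw [Kp_eq, jform_eigen_smul hAc hx (-l) 1]
  rw [show (-l + 1 * μ : ℝ) = μ - l by ring]
  rw [Complex.re_ofReal_mul]

lemma negJ_re (x : Fin N → ℂ) : (Jform (-J) x x).re = -(Jform J x x).re := by
  rw [Jform_neg_mat]
  simp

/-- Step 2: counting of negative squares of `l•J - J*A` on the whole space. -/
lemma step2 (hJinv : IsUnit J.det) (hJ : J.IsHermitian) (hAc : J * A = Aᴴ * J)
    (hd : Diagonalizable A) (hr : spectrum ℂ A ⊆ Set.range Complex.ofReal)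
    {l : ℝ} (hl : l ∉ SuppF A) :
    posSquares ((l : ℂ) • J - J * A) ⊤
      = ∑ μ ∈ SuppF A,
          (if l < μ then posSquares (-J) (ES A μ) else posSquares J (ES A μ)) := by
  classical
  -- witness families
  set Wq : ℝ → Submodule ℂ (Fin N → ℂ) :=
    fun μ => (exists_posSquares_witness (-J) (ES A μ)).choose with hWqdef
  set Wp : ℝ → Submodule ℂ (Fin N → ℂ) :=
    fun μ => (exists_posSquares_witness J (ES A μ)).choose with hWpdef
  have hWq : ∀ μ, Wq μ ≤ ES A μ ∧ Module.finrank ℂ (Wq μ) = posSquares (-J) (ES A μ)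
      ∧ PosOn (-J) (Wq μ) := fun μ => (exists_posSquares_witness (-J) (ES A μ)).choose_spec
  have hWp : ∀ μ, Wp μ ≤ ES A μ ∧ Module.finrank ℂ (Wp μ) = posSquares J (ES A μ)
      ∧ PosOn J (Wp μ) := fun μ => (exists_posSquares_witness J (ES A μ)).choose_spec
  set Wn : ℝ → Submodule ℂ (Fin N → ℂ) := fun μ => if l < μ then Wq μ else Wp μ with hWndef
  set Wo : ℝ → Submodule ℂ (Fin N → ℂ) := fun μ => if l < μ then Wp μ else Wq μ with hWodef
  have hWnE : ∀ μ ∈ SuppF A, Wn μ ≤ ES A μ := by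
    intro μ _
    show (if l < μ then Wq μ else Wp μ) ≤ ES A μ
    split_ifs with h
    · exact (hWq μ).1
    · exact (hWp μ).1
  have hWoE : ∀ μ ∈ SuppF A, Wo μ ≤ ES A μ := by
    intro μ _
    show (if l < μ then Wp μ else Wq μ) ≤ ES A μ
    split_ifs with h
    · exact (hWp μ).1
    · exact (hWq μ).1
  have hWnpos : ∀ μ ∈ SuppF A, PosOn ((l : ℂ) • J - J * A) (Wn μ) := by
    intro μ hμ x hx hx0
    have hμl : μ ≠ l := es_ne_of_mem hμ hl
    have hxE : x ∈ ES A μ := hWnE μ hμ hx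
    rw [Kn_eigen_val hAc hxE l]
    have hx' : x ∈ (if l < μ then Wq μ else Wp μ) := hx
    by_cases h : l < μ
    · rw [if_pos h] at hx'
      have := (hWq μ).2.2 x hx' hx0
      rw [negJ_re] at this
      nlinarith
    · rw [if_neg h] at hx'
      have := (hWp μ).2.2 x hx' hx0
      have hlt : μ < l := lt_of_le_of_ne (not_lt.mp h) hμl
      nlinarith
  have hWopos : ∀ μ ∈ SuppF A, PosOn (J * A - (l : ℂ) • J) (Wo μ) := by
    intro μ hμ x hx hx0
    have hμl : μ ≠ l := es_ne_of_mem hμ hl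
    have hxE : x ∈ ES A μ := hWoE μ hμ hx
    rw [Kp_eigen_val hAc hxE l]
    have hx' : x ∈ (if l < μ then Wp μ else Wq μ) := hx
    by_cases h : l < μ
    · rw [if_pos h] at hx'
      have := (hWp μ).2.2 x hx' hx0
      nlinarith
    · rw [if_neg h] at hx'
      have := (hWq μ).2.2 x hx' hx0
      rw [negJ_re] at this
      have hlt : μ < l := lt_of_le_of_ne (not_lt.mp h) hμl
      nlinarith
  have hQ : ∑ μ ∈ SuppF A,
      (if l < μ then posSquares (-J) (ES A μ) else posSquares J (ES A μ))
        ≤ posSquares ((l : ℂ) • J - J * A) ⊤ := by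
    have h1 := sum_le_posSquares (Kn_herm hJ hAc l) (Kn_orth hAc l) (SuppF A) Wn hWnE
      (L := ⊤) (fun μ _ => le_top) hWnpos
    have h2 : ∀ μ ∈ SuppF A, Module.finrank ℂ (Wn μ)
        = if l < μ then posSquares (-J) (ES A μ) else posSquares J (ES A μ) := by
      intro μ _
      by_cases h : l < μ
      · have e1 : Wn μ = Wq μ := if_pos h
        rw [e1, if_pos h]
        exact (hWq μ).2.1
      · have e1 : Wn μ = Wp μ := if_neg h
        rw [e1, if_neg h]
        exact (hWp μ).2.1
    rwa [Finset.sum_congr rfl h2] at h1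
  have hP : ∑ μ ∈ SuppF A,
      (if l < μ then posSquares J (ES A μ) else posSquares (-J) (ES A μ))
        ≤ posSquares (J * A - (l : ℂ) • J) ⊤ := by
    have h1 := sum_le_posSquares (Kp_herm hJ hAc l) (Kp_orth hAc l) (SuppF A) Wo hWoE
      (L := ⊤) (fun μ _ => le_top) hWopos
    have h2 : ∀ μ ∈ SuppF A, Module.finrank ℂ (Wo μ)
        = if l < μ then posSquares J (ES A μ) else posSquares (-J) (ES A μ) := by
      intro μ _
      by_cases h : l < μ
      · have e1 : Wo μ = Wp μ := if_pos h
        rw [e1, if_pos h]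
        exact (hWp μ).2.1
      · have e1 : Wo μ = Wq μ := if_neg h
        rw [e1, if_neg h]
        exact (hWq μ).2.1
    rwa [Finset.sum_congr rfl h2] at h1
  have htotal : posSquares (J * A - (l : ℂ) • J) ⊤
      + posSquares ((l : ℂ) • J - J * A) ⊤ ≤ N := by
    have h := posSquares_add_posSquares_neg_le (J * A - (l : ℂ) • J)
      (⊤ : Submodule ℂ (Fin N → ℂ))
    rw [show -(J * A - (l : ℂ) • J) = (l : ℂ) • J - J * A by abel] at h
    rwa [finrank_top, finrank_ambient] at h
  have hsum : (∑ μ ∈ SuppF A,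
      (if l < μ then posSquares J (ES A μ) else posSquares (-J) (ES A μ)))
      + (∑ μ ∈ SuppF A,
      (if l < μ then posSquares (-J) (ES A μ) else posSquares J (ES A μ))) = N := by
    rw [← Finset.sum_add_distrib]
    have h1 : ∀ μ ∈ SuppF A,
        ((if l < μ then posSquares J (ES A μ) else posSquares (-J) (ES A μ))
          + (if l < μ then posSquares (-J) (ES A μ) else posSquares J (ES A μ)))
        = Module.finrank ℂ (ES A μ) := by
      intro μ _
      split_ifs with h
      · exact pq_eq_finrank hJinv hJ hAc hd hr μ
      · rw [add_comm]
        exact pq_eq_finrank hJinv hJ hAc hd hr μ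
    rw [Finset.sum_congr rfl h1, ← finrank_biSup_es (SuppF A) (ES A) (fun μ _ => le_rfl),
      es_top hd hr, finrank_top, finrank_ambient]
  omega

/-- Step 3: the signature of the spectral subspace. -/
lemma step3 (hJinv : IsUnit J.det) (hJ : J.IsHermitian) (hAc : J * A = Aᴴ * J)
    (hd : Diagonalizable A) (hr : spectrum ℂ A ⊆ Set.range Complex.ofReal)
    (Δ : Set ℝ) [DecidablePred (· ∈ Δ)] :
    posSquares J (eigSpan A Δ) = ∑ μ ∈ (SuppF A).filter (· ∈ Δ), posSquares J (ES A μ)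
    ∧ posSquares (-J) (eigSpan A Δ)
        = ∑ μ ∈ (SuppF A).filter (· ∈ Δ), posSquares (-J) (ES A μ) := by
  classical
  set T := (SuppF A).filter (· ∈ Δ) with hTdef
  have hT : ∀ μ ∈ T, μ ∈ Δ := fun μ hμ => (Finset.mem_filter.mp hμ).2
  have hspan : eigSpan A Δ = ⨆ μ ∈ T, ES A μ := by
    apply le_antisymm
    · apply iSup₂_le
      intro μ hμ
      by_cases hS : μ ∈ SuppF A
      · exact le_iSup₂_of_le μ (Finset.mem_filter.mpr ⟨hS, hμ⟩) le_rfl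
      · rw [show Module.End.eigenspace (Matrix.toLin' A) (μ : ℂ) = ES A μ from rfl,
          es_eq_bot_of_not_mem hS]
        exact bot_le
    · apply iSup₂_le
      intro μ hμ
      exact le_iSup₂_of_le μ (hT μ hμ) le_rfl
  have hfr : Module.finrank ℂ (eigSpan A Δ) = ∑ μ ∈ T, Module.finrank ℂ (ES A μ) := by
    rw [hspan]
    exact finrank_biSup_es T (ES A) (fun μ _ => le_rfl)
  -- lower bounds
  set Wq : ℝ → Submodule ℂ (Fin N → ℂ) :=
    fun μ => (exists_posSquares_witness (-J) (ES A μ)).choose with hWqdef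
  set Wp : ℝ → Submodule ℂ (Fin N → ℂ) :=
    fun μ => (exists_posSquares_witness J (ES A μ)).choose with hWpdef
  have hWq : ∀ μ, Wq μ ≤ ES A μ ∧ Module.finrank ℂ (Wq μ) = posSquares (-J) (ES A μ)
      ∧ PosOn (-J) (Wq μ) := fun μ => (exists_posSquares_witness (-J) (ES A μ)).choose_spec
  have hWp : ∀ μ, Wp μ ≤ ES A μ ∧ Module.finrank ℂ (Wp μ) = posSquares J (ES A μ)
      ∧ PosOn J (Wp μ) := fun μ => (exists_posSquares_witness J (ES A μ)).choose_spec
  have horthJ : ∀ (μ ν : ℝ), μ ≠ ν → ∀ x ∈ ES A μ, ∀ y ∈ ES A ν, Jform J x y = 0 :=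
    fun μ ν hne x hx y hy => es_orth hAc hne hx hy
  have horthnJ : ∀ (μ ν : ℝ), μ ≠ ν → ∀ x ∈ ES A μ, ∀ y ∈ ES A ν, Jform (-J) x y = 0 := by
    intro μ ν hne x hx y hy
    rw [Jform_neg_mat, horthJ μ ν hne x hx y hy, neg_zero]
  have hJneg : (-J).IsHermitian := by
    show _ = _
    rw [Matrix.conjTranspose_neg, hJ.eq]
  have hsubP : ∀ μ ∈ T, Wp μ ≤ eigSpan A Δ := by
    intro μ hμ
    rw [hspan]
    exact le_trans (hWp μ).1 (le_iSup₂_of_le μ hμ le_rfl)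
  have hsubQ : ∀ μ ∈ T, Wq μ ≤ eigSpan A Δ := by
    intro μ hμ
    rw [hspan]
    exact le_trans (hWq μ).1 (le_iSup₂_of_le μ hμ le_rfl)
  have hgeP : ∑ μ ∈ T, posSquares J (ES A μ) ≤ posSquares J (eigSpan A Δ) := by
    have h1 := sum_le_posSquares hJ horthJ T Wp (fun μ _ => (hWp μ).1) hsubP
      (fun μ _ => (hWp μ).2.2)
    rwa [Finset.sum_congr rfl (fun μ _ => (hWp μ).2.1)] at h1
  have hgeQ : ∑ μ ∈ T, posSquares (-J) (ES A μ) ≤ posSquares (-J) (eigSpan A Δ) := by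
    have h1 := sum_le_posSquares hJneg horthnJ T Wq (fun μ _ => (hWq μ).1) hsubQ
      (fun μ _ => (hWq μ).2.2)
    rwa [Finset.sum_congr rfl (fun μ _ => (hWq μ).2.1)] at h1
  have hle : posSquares J (eigSpan A Δ) + posSquares (-J) (eigSpan A Δ)
      ≤ ∑ μ ∈ T, (posSquares J (ES A μ) + posSquares (-J) (ES A μ)) := by
    have h1 := posSquares_add_posSquares_neg_le J (eigSpan A Δ)
    rw [hfr] at h1
    have h2 : ∀ μ ∈ T, Module.finrank ℂ (ES A μ)
        = posSquares J (ES A μ) + posSquares (-J) (ES A μ) :=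
      fun μ _ => (pq_eq_finrank hJinv hJ hAc hd hr μ).symm
    rwa [Finset.sum_congr rfl h2] at h1
  rw [Finset.sum_add_distrib] at hle
  constructor
  · omega
  · omega
end Steps
section Final

variable {J A : Matrix (Fin N) (Fin N) ℂ}

lemma sig_eq (L : Submodule ℂ (Fin N → ℂ)) :
    sig J L = (posSquares J L : ℤ) - (posSquares (-J) L : ℤ) := by
  rw [sig, negSquares_eq]

lemma posSquares_bot : posSquares J (⊥ : Submodule ℂ (Fin N → ℂ)) = 0 := by
  have h := posSquares_le J (L := ⊥) (m := 0) ?_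
  · omega
  · intro W hW _
    rw [le_bot_iff.mp hW, finrank_bot]

lemma sig_bot : sig J (⊥ : Submodule ℂ (Fin N → ℂ)) = 0 := by
  rw [sig_eq, posSquares_bot, posSquares_bot]
  ring

/-- Central identity: the signature of the spectral subspace as a difference of
negative-square counts of the pencil at the endpoints. -/
lemma central (hJinv : IsUnit J.det) (hJ : J.IsHermitian) (hAc : J * A = Aᴴ * J)
    (hd : Diagonalizable A) (hr : spectrum ℂ A ⊆ Set.range Complex.ofReal)
    {a b : ℝ} (ha : a ∉ SuppF A) (hb : b ∉ SuppF A) (hab : a < b)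
    (Δ : Set ℝ) [DecidablePred (· ∈ Δ)]
    (hΔ : ∀ μ ∈ SuppF A, μ ∈ Δ ↔ (a < μ ∧ μ < b)) :
    sig J (eigSpan A Δ)
      = (posSquares ((b : ℂ) • J - J * A) ⊤ : ℤ)
        - (posSquares ((a : ℂ) • J - J * A) ⊤ : ℤ) := by
  classical
  obtain ⟨h3p, h3q⟩ := step3 hJinv hJ hAc hd hr Δ
  rw [sig_eq, h3p, h3q, step2 hJinv hJ hAc hd hr ha, step2 hJinv hJ hAc hd hr hb]
  push_cast
  rw [← Finset.sum_sub_distrib, ← Finset.sum_sub_distrib]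
  rw [Finset.sum_filter]
  apply Finset.sum_congr rfl
  intro μ hμ
  by_cases hμΔ : μ ∈ Δ
  · obtain ⟨haμ, hμb⟩ := (hΔ μ hμ).mp hμΔ
    rw [if_pos hμΔ, if_neg (not_lt.mpr hμb.le), if_pos haμ]
  · rw [if_neg hμΔ]
    have hnot : ¬ (a < μ ∧ μ < b) := fun h => hμΔ ((hΔ μ hμ).mpr h)
    by_cases hbμ : b < μ
    · rw [if_pos hbμ, if_pos (lt_trans hab hbμ)]
      ring
    · have hμb : μ < b := lt_of_le_of_ne (not_lt.mp hbμ) (es_ne_of_mem hμ hb)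
      have haμ : ¬ a < μ := fun h => hnot ⟨h, hμb⟩
      rw [if_neg hbμ, if_neg haμ]
      ring

end Final
end Work

open Work in
theorem stmt10 {N : ℕ} (J A₁ A₂ : Matrix (Fin N) (Fin N) ℂ)
    (hJinv : IsUnit J.det) (hJ : J.IsHermitian)
    (hA₁ : J * A₁ = A₁ᴴ * J) (hA₂ : J * A₂ = A₂ᴴ * J)
    (hd₁ : Diagonalizable A₁) (hd₂ : Diagonalizable A₂)
    (hr₁ : spectrum ℂ A₁ ⊆ Set.range (Complex.ofReal))
    (hr₂ : spectrum ℂ A₂ ⊆ Set.range (Complex.ofReal))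
    (n : ℕ)
    (hn : N - Module.finrank ℂ (LinearMap.ker (Matrix.toLin' (A₁ - A₂))) = n)
    (Δ : Set ℝ) (hΔopen : IsOpen Δ) (hΔconn : Δ.OrdConnected) :
    |sig J (eigSpan A₂ Δ) - sig J (eigSpan A₁ Δ)| ≤ n := by
  classical
  -- the rank-n perturbation matrix
  set R : Matrix (Fin N) (Fin N) ℂ := J * A₁ - J * A₂ with hRdef
  have hJA1 : (J * A₁).IsHermitian := by
    show _ = _
    rw [Matrix.conjTranspose_mul, hJ.eq, ← hA₁]
  have hJA2 : (J * A₂).IsHermitian := by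
    show _ = _
    rw [Matrix.conjTranspose_mul, hJ.eq, ← hA₂]
  have hRherm : R.IsHermitian := hJA1.sub hJA2
  have hrank : posSquares R ⊤ + posSquares (-R) ⊤ ≤ n := by
    have h := posSquares_add_neg_le_rank hRherm
    have hR2 : R = J * (A₁ - A₂) := by rw [hRdef, Matrix.mul_sub]
    have hrk : R.rank = (A₁ - A₂).rank := by
      rw [hR2]
      exact Matrix.rank_mul_eq_right_of_isUnit_det J (A₁ - A₂) hJinv
    have heq : Matrix.toLin' (A₁ - A₂) = (A₁ - A₂).mulVecLin := by
      apply LinearMap.ext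
      intro v
      rw [Matrix.toLin'_apply, Matrix.mulVecLin_apply]
    have hrdef : (A₁ - A₂).rank
        = Module.finrank ℂ (LinearMap.range ((A₁ - A₂).mulVecLin)) := rfl
    have hnull := LinearMap.finrank_range_add_finrank_ker ((A₁ - A₂).mulVecLin)
    rw [finrank_ambient] at hnull
    rw [heq] at hn
    omega
  haveI : DecidablePred (· ∈ Δ) := Classical.decPred _
  set T2 : Finset ℝ := SuppF A₁ ∪ SuppF A₂ with hT2def
  set TΔ : Finset ℝ := T2.filter (· ∈ Δ) with hTΔdef
  by_cases hne : TΔ.Nonempty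
  · -- choose the endpoints a < b
    set m : ℝ := TΔ.min' hne with hmdef
    set M : ℝ := TΔ.max' hne with hMdef
    have hmT : m ∈ TΔ := TΔ.min'_mem hne
    have hMT : M ∈ TΔ := TΔ.max'_mem hne
    have hmΔ : m ∈ Δ := (Finset.mem_filter.mp hmT).2
    have hMΔ : M ∈ Δ := (Finset.mem_filter.mp hMT).2
    have hmM : m ≤ M := TΔ.min'_le M (TΔ.max'_mem hne)
    obtain ⟨ε₁, hε₁, hball₁⟩ := Metric.isOpen_iff.mp hΔopen m hmΔ
    obtain ⟨ε₂, hε₂, hball₂⟩ := Metric.isOpen_iff.mp hΔopen M hMΔ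
    obtain ⟨a, haI, haT⟩ := (Set.Ioo_infinite (show m - ε₁ < m by linarith)).exists_notMem_finset T2
    obtain ⟨b, hbI, hbT⟩ := (Set.Ioo_infinite (show M < M + ε₂ by linarith)).exists_notMem_finset T2
    have haΔ : a ∈ Δ := by
      apply hball₁
      rw [Real.ball_eq_Ioo]
      exact ⟨haI.1, lt_trans haI.2 (by linarith)⟩
    have hbΔ : b ∈ Δ := by
      apply hball₂
      rw [Real.ball_eq_Ioo]
      exact ⟨lt_trans (by linarith) hbI.1, hbI.2⟩
    have ham : a < m := haI.2
    have hMb : M < b := hbI.1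
    have hab : a < b := lt_of_lt_of_le ham (le_trans hmM hMb.le)
    have hΔiff : ∀ μ ∈ T2, (μ ∈ Δ ↔ (a < μ ∧ μ < b)) := by
      intro μ hμT2
      constructor
      · intro hμΔ
        have hμTΔ : μ ∈ TΔ := Finset.mem_filter.mpr ⟨hμT2, hμΔ⟩
        exact ⟨lt_of_lt_of_le ham (TΔ.min'_le μ hμTΔ),
          lt_of_le_of_lt (TΔ.le_max' μ hμTΔ) hMb⟩
      · rintro ⟨h1, h2⟩
        exact hΔconn.out haΔ hbΔ ⟨h1.le, h2.le⟩
    have ha1 : a ∉ SuppF A₁ := fun h => haT (Finset.mem_union_left _ h)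
    have ha2 : a ∉ SuppF A₂ := fun h => haT (Finset.mem_union_right _ h)
    have hb1 : b ∉ SuppF A₁ := fun h => hbT (Finset.mem_union_left _ h)
    have hb2 : b ∉ SuppF A₂ := fun h => hbT (Finset.mem_union_right _ h)
    have hcen1 := central hJinv hJ hA₁ hd₁ hr₁ ha1 hb1 hab Δ
      (fun μ hμ => hΔiff μ (Finset.mem_union_left _ hμ))
    have hcen2 := central hJinv hJ hA₂ hd₂ hr₂ ha2 hb2 hab Δ
      (fun μ hμ => hΔiff μ (Finset.mem_union_right _ hμ))
    -- perturbation bounds at a and b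
    have hpert : ∀ l : ℝ,
        posSquares ((l : ℂ) • J - J * A₂) ⊤ ≤ posSquares ((l : ℂ) • J - J * A₁) ⊤
            + posSquares R ⊤
        ∧ posSquares ((l : ℂ) • J - J * A₁) ⊤ ≤ posSquares ((l : ℂ) • J - J * A₂) ⊤
            + posSquares (-R) ⊤ := by
      intro l
      have hK1 := Kn_herm hJ hA₁ l
      have hK2 := Kn_herm hJ hA₂ l
      constructor
      · have h := posSquares_perturb hK1 hK2
        have hsub : ((l : ℂ) • J - J * A₂) - ((l : ℂ) • J - J * A₁) = R := by
          rw [hRdef]; abel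
        rwa [hsub] at h
      · have h := posSquares_perturb hK2 hK1
        have hsub : ((l : ℂ) • J - J * A₁) - ((l : ℂ) • J - J * A₂) = -R := by
          rw [hRdef]; abel
        rwa [hsub] at h
    obtain ⟨h2a, h1a⟩ := hpert a
    obtain ⟨h2b, h1b⟩ := hpert b
    rw [hcen1, hcen2, abs_le]
    constructor
    · omega
    · omega
  · -- the interval contains no eigenvalues of either matrix
    rw [Finset.not_nonempty_iff_eq_empty] at hne
    have hbot : ∀ (A : Matrix (Fin N) (Fin N) ℂ), SuppF A ⊆ T2 → eigSpan A Δ = ⊥ := by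
      intro A hsub
      rw [eq_bot_iff]
      apply iSup₂_le
      intro μ hμ
      have hS : μ ∉ SuppF A := by
        intro hS
        have : μ ∈ TΔ := Finset.mem_filter.mpr ⟨hsub hS, hμ⟩
        rw [hne] at this
        exact absurd this (Finset.notMem_empty μ)
      rw [show Module.End.eigenspace (Matrix.toLin' A) (μ : ℂ) = ES A μ from rfl,
        es_eq_bot_of_not_mem hS]
    rw [hbot A₁ Finset.subset_union_left, hbot A₂ Finset.subset_union_right, sig_bot,
      sub_zero, abs_zero]
    exact Int.ofNat_nonneg n
end

section
/- Let J be an invertible Hermitian N×N matrix with κ negative eigenvalues, and let A be a diagonalizable J-selfadjoint matrix with real spectrum. For any open real interval Δ, let L_Δ be the sum of eigenspaces of A for eigenvalues in Δ. Then κ₋(L_Δ) ≤ κ and κ₋((L_Δ)^⊥ᴶ) = κ - κ₋(L_Δ), where κ₋(M) denotes the number of negative squares of [x,y]=(Jx,y) on the subspace M and ⊥ᴶ is the J-orthogonal complement. -/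
open Matrix

/-- The `J`-orthogonal complement of a subspace `L`. -/
noncomputable def Jorth {N : ℕ} (J : Matrix (Fin N) (Fin N) ℂ) (L : Submodule ℂ (Fin N → ℂ)) :
    Submodule ℂ (Fin N → ℂ) where
  carrier := {y | ∀ x ∈ L, Jform J x y = 0}
  zero_mem' := by intro x hx; simp [Jform]
  add_mem' := by
    intro a b ha hb x hx
    have h1 := ha x hx
    have h2 := hb x hx
    simp only [Jform] at h1 h2
    simp [Jform, dotProduct_add, h1, h2]
  smul_mem' := by
    intro c y hy x hx
    have h := hy x hx
    simp only [Jform] at h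
    simp [Jform, dotProduct_smul, h]

variable {N : ℕ} {J : Matrix (Fin N) (Fin N) ℂ}

lemma Jform_add_right (x y z : Fin N → ℂ) : Jform J x (y + z) = Jform J x y + Jform J x z := by
  simp [Jform, dotProduct_add]

lemma Jform_smul_right (c : ℂ) (x y : Fin N → ℂ) : Jform J x (c • y) = c * Jform J x y := by
  simp [Jform, dotProduct_smul, smul_eq_mul]

lemma Jform_add_left (x y z : Fin N → ℂ) : Jform J (x + y) z = Jform J x z + Jform J y z := by
  simp [Jform, mulVec_add, star_add, add_dotProduct]

lemma Jform_smul_left (c : ℂ) (x y : Fin N → ℂ) :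
    Jform J (c • x) y = starRingEnd ℂ c * Jform J x y := by
  simp [Jform, mulVec_smul, star_smul, smul_dotProduct, smul_eq_mul]

lemma Jform_alt (x y : Fin N → ℂ) (hJ : J.IsHermitian) :
    Jform J x y = star x ⬝ᵥ (J *ᵥ y) := by
  rw [Jform, star_mulVec, hJ.eq, ← dotProduct_mulVec]

lemma Jform_conj (hJ : J.IsHermitian) (x y : Fin N → ℂ) :
    Jform J x y = starRingEnd ℂ (Jform J y x) := by
  show _ = star (Jform J y x)
  rw [Jform_alt x y hJ, Jform]
  exact star_dotProduct _ _

lemma Jform_sum_left {ι : Type*} (s : Finset ι) (f : ι → (Fin N → ℂ)) (y : Fin N → ℂ) :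
    Jform J (∑ i ∈ s, f i) y = ∑ i ∈ s, Jform J (f i) y := by
  rw [Jform, show J *ᵥ (∑ i ∈ s, f i) = ∑ i ∈ s, J *ᵥ f i from map_sum J.mulVecLin f s,
    star_sum]
  simp only [Jform, dotProduct, Finset.sum_apply, Finset.sum_mul]
  exact Finset.sum_comm

lemma Jform_sum_right {ι : Type*} (s : Finset ι) (f : ι → (Fin N → ℂ)) (y : Fin N → ℂ) :
    Jform J y (∑ i ∈ s, f i) = ∑ i ∈ s, Jform J y (f i) := by
  simp only [Jform, dotProduct, Finset.sum_apply, Finset.mul_sum]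
  exact Finset.sum_comm

def NegDef {N : ℕ} (J : Matrix (Fin N) (Fin N) ℂ) (W : Submodule ℂ (Fin N → ℂ)) : Prop :=
  ∀ x ∈ W, x ≠ 0 → (Jform J x x).re < 0

def NonNegOn {N : ℕ} (J : Matrix (Fin N) (Fin N) ℂ) (W : Submodule ℂ (Fin N → ℂ)) : Prop :=
  ∀ x ∈ W, 0 ≤ (Jform J x x).re

lemma diag_core {N m : ℕ} (J : Matrix (Fin N) (Fin N) ℂ)
    (M : Submodule ℂ (Fin N → ℂ)) (b : Module.Basis (Fin m) ℂ M)
    (G : Matrix (Fin m) (Fin m) ℂ) (hG : G.IsHermitian)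
    (hGram : ∀ i j, Jform J (b i).1 (b j).1 = G i j) :
    ∃ Wn Wp : Submodule ℂ (Fin N → ℂ), Wn ≤ M ∧ Wp ≤ M ∧ NegDef J Wn ∧ NonNegOn J Wp ∧
      Wn ⊔ Wp = M ∧
      Module.finrank ℂ Wn = (Finset.univ.filter fun i => hG.eigenvalues i < 0).card ∧
      Module.finrank ℂ Wn + Module.finrank ℂ Wp = Module.finrank ℂ M := by
  classical
  set U : Matrix (Fin m) (Fin m) ℂ := (hG.eigenvectorUnitary : Matrix (Fin m) (Fin m) ℂ) with hU
  have hUunit : IsUnit U := ⟨Unitary.toUnits hG.eigenvectorUnitary, rfl⟩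
  have hUdet : IsUnit U.det := by
    rw [← Matrix.isUnit_iff_isUnit_det]; exact hUunit
  set c : Module.Basis (Fin m) ℂ M := b.map (Matrix.toLinearEquiv b U hUdet) with hc
  set w : Fin m → (Fin N → ℂ) := fun k => (c k : Fin N → ℂ) with hwdef
  have hw_indep : LinearIndependent ℂ w :=
    c.linearIndependent.map' M.subtype (Submodule.ker_subtype M)
  have hwM : ∀ k, w k ∈ M := fun k => (c k).2
  have hck : ∀ k, w k = ∑ i, U i k • (b i : Fin N → ℂ) := by
    intro k
    have : c k = ∑ i, U i k • b i := by
      rw [hc, Module.Basis.map_apply, Matrix.toLinearEquiv_apply, Matrix.toLin_self]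
    rw [show w k = ((c k : M) : Fin N → ℂ) from rfl, this]
    push_cast [Submodule.coe_sum]
    simp
  have hgram_w : ∀ k l, Jform J (w k) (w l) =
      Matrix.diagonal (RCLike.ofReal ∘ hG.eigenvalues) k l := by
    intro k l
    have lhs : Jform J (w k) (w l) =
        ∑ i, ∑ j, (starRingEnd ℂ) (U i k) * (U j l * G i j) := by
      rw [hck, hck, Jform_sum_left]
      refine Finset.sum_congr rfl fun i _ => ?_
      rw [Jform_smul_left, Jform_sum_right, Finset.mul_sum]
      refine Finset.sum_congr rfl fun j _ => ?_
      rw [Jform_smul_right, hGram]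
    have rhs : (star U * G * U) k l =
        ∑ j, ∑ i, (starRingEnd ℂ) (U i k) * (U j l * G i j) := by
      rw [Matrix.mul_apply]
      refine Finset.sum_congr rfl fun j _ => ?_
      rw [Matrix.mul_apply, Finset.sum_mul]
      refine Finset.sum_congr rfl fun i _ => ?_
      simp only [Matrix.star_apply, RCLike.star_def]
      ring
    rw [← hG.conjStarAlgAut_star_eigenvectorUnitary, Unitary.conjStarAlgAut_star_apply, lhs]
    rw [show star (hG.eigenvectorUnitary : Matrix (Fin m) (Fin m) ℂ) * G *
      (hG.eigenvectorUnitary : Matrix (Fin m) (Fin m) ℂ) = star U * G * U from rfl, rhs]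
    exact Finset.sum_comm
  set lam := hG.eigenvalues with hlam
  have hgram_w' : ∀ k l, Jform J (w k) (w l) = if k = l then ((lam k : ℝ) : ℂ) else 0 := by
    intro k l
    rw [hgram_w, Matrix.diagonal_apply]
    rfl
  have key : ∀ (p : Fin m → Prop) (_ : DecidablePred p) (r : {k // p k} → ℂ),
      (Jform J (∑ k, r k • w k.1) (∑ k, r k • w k.1)).re
        = ∑ k : {k // p k}, Complex.normSq (r k) * lam k.1 := by
    intro p hp r
    rw [Jform_sum_left, Complex.re_sum]
    refine Finset.sum_congr rfl fun k _ => ?_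
    rw [Jform_smul_left, Jform_sum_right]
    have h1 : ∀ l : {k // p k}, Jform J (w k.1) (r l • w l.1)
        = if k = l then r l * ((lam k.1 : ℝ) : ℂ) else 0 := by
      intro l
      rw [Jform_smul_right, hgram_w']
      by_cases h : k = l
      · subst h; simp
      · have h' : ¬ (k.1 = l.1) := fun hh => h (Subtype.ext hh)
        simp [h, h']
    rw [Finset.sum_congr rfl fun l _ => h1 l, Finset.sum_ite_eq Finset.univ k
      (fun l => r l * ((lam k.1 : ℝ) : ℂ))]
    have h2 : (starRingEnd ℂ) (r k) * (r k * ((lam k.1 : ℝ) : ℂ))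
        = ((Complex.normSq (r k) : ℝ) : ℂ) * ((lam k.1 : ℝ) : ℂ) := by
      rw [← mul_assoc, mul_comm ((starRingEnd ℂ) (r k)) (r k), Complex.mul_conj]
    simp [h2]
  -- the negative part
  set vn : {k // lam k < 0} → (Fin N → ℂ) := fun k => w k.1 with hvn
  set vp : {k // ¬ lam k < 0} → (Fin N → ℂ) := fun k => w k.1 with hvp
  set Wn := Submodule.span ℂ (Set.range vn) with hWn
  set Wp := Submodule.span ℂ (Set.range vp) with hWp
  have hWnM : Wn ≤ M := by
    rw [hWn, Submodule.span_le]
    rintro z ⟨k, rfl⟩; exact hwM k.1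
  have hWpM : Wp ≤ M := by
    rw [hWp, Submodule.span_le]
    rintro z ⟨k, rfl⟩; exact hwM k.1
  have hneg : NegDef J Wn := by
    intro x hx hne
    obtain ⟨r, hr⟩ := (Submodule.mem_span_range_iff_exists_fun ℂ).mp hx
    rw [← hr, key _ (inferInstance) r]
    have hex : ∃ k, r k ≠ 0 := by
      by_contra hall
      push_neg at hall
      apply hne
      rw [← hr]
      simp [hall]
    obtain ⟨k0, hk0⟩ := hex
    have hlt : ∑ k : {k // lam k < 0}, Complex.normSq (r k) * lam k.1
        < ∑ _k : {k // lam k < 0}, (0 : ℝ) := by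
      refine Finset.sum_lt_sum (fun i _ => ?_) ⟨k0, Finset.mem_univ _, ?_⟩
      · exact mul_nonpos_of_nonneg_of_nonpos (Complex.normSq_nonneg _) (le_of_lt i.2)
      · exact mul_neg_of_pos_of_neg (Complex.normSq_pos.mpr hk0) k0.2
    simpa using hlt
  have hpos : NonNegOn J Wp := by
    intro x hx
    obtain ⟨r, hr⟩ := (Submodule.mem_span_range_iff_exists_fun ℂ).mp hx
    rw [← hr, key _ (inferInstance) r]
    refine Finset.sum_nonneg fun i _ => ?_
    exact mul_nonneg (Complex.normSq_nonneg _) (not_lt.mp i.2)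
  have hranku : Set.range vn ∪ Set.range vp = Set.range w := by
    ext z
    constructor
    · rintro (⟨k, rfl⟩ | ⟨k, rfl⟩) <;> exact ⟨k.1, rfl⟩
    · rintro ⟨k, rfl⟩
      by_cases h : lam k < 0
      · exact Or.inl ⟨⟨k, h⟩, rfl⟩
      · exact Or.inr ⟨⟨k, h⟩, rfl⟩
  have hspanw : Submodule.span ℂ (Set.range w) = M := by
    have h1 : Set.range w = M.subtype '' (Set.range c) := by
      rw [← Set.range_comp]; rfl
    rw [h1, Submodule.span_image, Module.Basis.span_eq, Submodule.map_subtype_top]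
  have hsup : Wn ⊔ Wp = M := by
    rw [hWn, hWp, ← Submodule.span_union, hranku, hspanw]
  have hrn : Module.finrank ℂ Wn = Fintype.card {k // lam k < 0} :=
    finrank_span_eq_card (hw_indep.comp Subtype.val Subtype.val_injective)
  have hrp : Module.finrank ℂ Wp = Fintype.card {k // ¬ lam k < 0} :=
    finrank_span_eq_card (hw_indep.comp Subtype.val Subtype.val_injective)
  refine ⟨Wn, Wp, hWnM, hWpM, hneg, hpos, hsup, ?_, ?_⟩
  · rw [hrn, Fintype.card_subtype]
  · rw [hrn, hrp, Fintype.card_subtype, Fintype.card_subtype,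
      Module.finrank_eq_card_basis b, Fintype.card_fin]
    have h := Finset.card_filter_add_card_filter_not
      (s := (Finset.univ : Finset (Fin m))) (p := fun i => lam i < 0)
    simpa using h

lemma exists_split {N : ℕ} (J : Matrix (Fin N) (Fin N) ℂ) (hJ : J.IsHermitian)
    (M : Submodule ℂ (Fin N → ℂ)) :
    ∃ Wn Wp : Submodule ℂ (Fin N → ℂ), Wn ≤ M ∧ Wp ≤ M ∧ NegDef J Wn ∧ NonNegOn J Wp ∧
      Wn ⊔ Wp = M ∧ Module.finrank ℂ Wn + Module.finrank ℂ Wp = Module.finrank ℂ M := by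
  classical
  set b := Module.finBasis ℂ M with hb
  set G : Matrix (Fin (Module.finrank ℂ M)) (Fin (Module.finrank ℂ M)) ℂ :=
    Matrix.of fun i j => Jform J (b i).1 (b j).1 with hGdef
  have hG : G.IsHermitian := by
    ext i j
    rw [Matrix.conjTranspose_apply]
    show star (Jform J (b j).1 (b i).1) = Jform J (b i).1 (b j).1
    exact (Jform_conj hJ _ _).symm
  obtain ⟨Wn, Wp, h1, h2, h3, h4, h5, _, h7⟩ := diag_core J M b G hG (fun i j => rfl)
  exact ⟨Wn, Wp, h1, h2, h3, h4, h5, h7⟩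

lemma negSquares_bddAbove {N : ℕ} (J : Matrix (Fin N) (Fin N) ℂ)
    (L : Submodule ℂ (Fin N → ℂ)) :
    BddAbove {d : ℕ | ∃ W : Submodule ℂ (Fin N → ℂ), W ≤ L ∧ Module.finrank ℂ W = d ∧
      ∀ x ∈ W, x ≠ 0 → (Jform J x x).re < 0} := by
  refine ⟨N, ?_⟩
  rintro d ⟨W, _, rfl, _⟩
  have h1 : Module.finrank ℂ W ≤ Module.finrank ℂ (Fin N → ℂ) := W.finrank_le
  simpa [Module.finrank_fin_fun] using h1

lemma ns_eq {N : ℕ} (J : Matrix (Fin N) (Fin N) ℂ) (M Wn Wp : Submodule ℂ (Fin N → ℂ))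
    (hWnM : Wn ≤ M) (hWpM : Wp ≤ M) (hneg : NegDef J Wn) (hpos : NonNegOn J Wp)
    (hsup : Wn ⊔ Wp = M)
    (hrk : Module.finrank ℂ Wn + Module.finrank ℂ Wp = Module.finrank ℂ M) :
    negSquares J M = Module.finrank ℂ Wn := by
  apply le_antisymm
  · have hne : {d : ℕ | ∃ W : Submodule ℂ (Fin N → ℂ), W ≤ M ∧ Module.finrank ℂ W = d ∧
        ∀ x ∈ W, x ≠ 0 → (Jform J x x).re < 0}.Nonempty :=
      ⟨0, ⊥, bot_le, finrank_bot ℂ _, fun x hx hxne => absurd ((Submodule.mem_bot ℂ).mp hx) hxne⟩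
    refine csSup_le hne ?_
    rintro d ⟨W, hWM, rfl, hWneg⟩
    have hdisj : W ⊓ Wp = ⊥ := by
      rw [eq_bot_iff]
      rintro x ⟨hx1, hx2⟩
      by_contra hxne
      have hne : x ≠ 0 := fun h => hxne (h ▸ Submodule.zero_mem _)
      have := hWneg x hx1 hne
      have := hpos x hx2
      simp only [Submodule.mem_bot] at hxne
      linarith
    have h1 := Submodule.finrank_sup_add_finrank_inf_eq W Wp
    rw [hdisj, finrank_bot, add_zero] at h1
    have h2 : Module.finrank ℂ (W ⊔ Wp : Submodule ℂ (Fin N → ℂ)) ≤ Module.finrank ℂ M :=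
      Submodule.finrank_mono (sup_le hWM hWpM)
    omega
  · exact le_csSup (negSquares_bddAbove J M) ⟨Wn, hWnM, rfl, hneg⟩

lemma ns_top {N : ℕ} (J : Matrix (Fin N) (Fin N) ℂ) (hJ : J.IsHermitian) :
    negSquares J ⊤ =
      (Finset.univ.filter fun i => hJ.eigenvalues i < 0).card := by
  classical
  set b : Module.Basis (Fin N) ℂ (⊤ : Submodule ℂ (Fin N → ℂ)) :=
    (Pi.basisFun ℂ (Fin N)).map (Submodule.topEquiv).symm with hb
  have hGram : ∀ i j, Jform J ((b i).1) ((b j).1) = J i j := by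
    intro i j
    have h1 : ((b i).1) = Pi.single i (1 : ℂ) := by
      simp [hb, Pi.basisFun_apply]
    have h2 : ((b j).1) = Pi.single j (1 : ℂ) := by
      simp [hb, Pi.basisFun_apply]
    rw [h1, h2, Jform]
    rw [Matrix.mulVec_single, dotProduct_single]
    simp [hJ.apply]
  obtain ⟨Wn, Wp, h1, h2, h3, h4, h5, h6, h7⟩ := diag_core J ⊤ b J hJ hGram
  rw [ns_eq J ⊤ Wn Wp h1 h2 h3 h4 h5 h7, h6]

lemma Jform_Amul {N : ℕ} {J A : Matrix (Fin N) (Fin N) ℂ} (hA : J * A = Aᴴ * J)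
    (x y : Fin N → ℂ) : Jform J (A *ᵥ x) y = Jform J x (A *ᵥ y) := by
  rw [Jform, Jform, mulVec_mulVec, hA, ← mulVec_mulVec, star_mulVec,
    conjTranspose_conjTranspose, ← dotProduct_mulVec]

/-- A `Jform`-functional as a linear map. -/
noncomputable def JformL {N : ℕ} (J : Matrix (Fin N) (Fin N) ℂ) (y : Fin N → ℂ) :
    (Fin N → ℂ) →ₗ[ℂ] ℂ where
  toFun x := Jform J y x
  map_add' a b := Jform_add_right y a b
  map_smul' c a := by
    show Jform J y (c • a) = (RingHom.id ℂ) c • Jform J y a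
    rw [Jform_smul_right]
    rfl

lemma orth_eig {N : ℕ} {J A : Matrix (Fin N) (Fin N) ℂ} (hA : J * A = Aᴴ * J)
    (Δ : Set ℝ) (ν : ℝ) (hν : ν ∉ Δ) (y : Fin N → ℂ)
    (hy : y ∈ Module.End.eigenspace (Matrix.toLin' A) (ν : ℂ)) :
    ∀ x ∈ eigSpan A Δ, Jform J y x = 0 := by
  have hsub : eigSpan A Δ ≤ LinearMap.ker (JformL J y) := by
    refine iSup_le fun μ => iSup_le fun hμ => fun x hx => ?_
    rw [Module.End.mem_eigenspace_iff, Matrix.toLin'_apply] at hx hy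
    have h1 : Jform J y (A *ᵥ x) = (μ : ℂ) * Jform J y x := by
      rw [hx, Jform_smul_right]
    have h2 : Jform J y (A *ᵥ x) = (ν : ℂ) * Jform J y x := by
      rw [← Jform_Amul hA, hy, Jform_smul_left, Complex.conj_ofReal]
    have hμν : (μ : ℂ) ≠ (ν : ℂ) := by
      simp only [ne_eq, Complex.ofReal_inj]
      rintro rfl; exact hν hμ
    have h3 : ((μ : ℂ) - (ν : ℂ)) * Jform J y x = 0 := by
      rw [sub_mul, ← h1, ← h2, sub_self]
    rcases mul_eq_zero.mp h3 with h | h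
    · exact absurd (sub_eq_zero.mp h) hμν
    · exact h
  exact fun x hx => hsub hx

lemma negdef_sup {N : ℕ} {J : Matrix (Fin N) (Fin N) ℂ} {W1 W2 : Submodule ℂ (Fin N → ℂ)}
    (h1 : NegDef J W1) (h2 : NegDef J W2)
    (horth : ∀ x ∈ W1, ∀ y ∈ W2, Jform J x y = 0 ∧ Jform J y x = 0) :
    NegDef J (W1 ⊔ W2) := by
  intro z hz hzne
  obtain ⟨x, hx, y, hy, rfl⟩ := Submodule.mem_sup.mp hz
  obtain ⟨ho1, ho2⟩ := horth x hx y hy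
  have hquad : Jform J (x + y) (x + y) = Jform J x x + Jform J y y := by
    rw [Jform_add_left, Jform_add_right, Jform_add_right, ho1, ho2]
    ring
  rw [hquad, Complex.add_re]
  have hle : ∀ (W : Submodule ℂ (Fin N → ℂ)), NegDef J W → ∀ v ∈ W, (Jform J v v).re ≤ 0 := by
    intro W hW v hv
    rcases eq_or_ne v 0 with rfl | hvne
    · simp [Jform]
    · exact le_of_lt (hW v hv hvne)
  rcases eq_or_ne x 0 with rfl | hx0
  · have : y ≠ 0 := by simpa using hzne
    have := h2 y hy this
    have : (Jform J (0 : Fin N → ℂ) 0).re = 0 := by simp [Jform]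
    linarith [h2 y hy (by simpa using hzne)]
  · have := h1 x hx hx0
    linarith [hle W2 h2 y hy]

lemma nonneg_sup {N : ℕ} {J : Matrix (Fin N) (Fin N) ℂ} {W1 W2 : Submodule ℂ (Fin N → ℂ)}
    (h1 : NonNegOn J W1) (h2 : NonNegOn J W2)
    (horth : ∀ x ∈ W1, ∀ y ∈ W2, Jform J x y = 0 ∧ Jform J y x = 0) :
    NonNegOn J (W1 ⊔ W2) := by
  intro z hz
  obtain ⟨x, hx, y, hy, rfl⟩ := Submodule.mem_sup.mp hz
  obtain ⟨ho1, ho2⟩ := horth x hx y hy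
  have hquad : Jform J (x + y) (x + y) = Jform J x x + Jform J y y := by
    rw [Jform_add_left, Jform_add_right, Jform_add_right, ho1, ho2]
    ring
  rw [hquad, Complex.add_re]
  linarith [h1 x hx, h2 y hy]

theorem stmt16 {N : ℕ} (J A : Matrix (Fin N) (Fin N) ℂ)
    (hJinv : IsUnit J.det) (hJ : J.IsHermitian) (κ : ℕ)
    (hκ : (Finset.univ.filter fun i => hJ.eigenvalues i < 0).card = κ)
    (hA : J * A = Aᴴ * J) (hd : Diagonalizable A)
    (hr : spectrum ℂ A ⊆ Set.range (Complex.ofReal))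
    (Δ : Set ℝ) (hΔopen : IsOpen Δ) (hΔconn : Δ.OrdConnected) :
    negSquares J (eigSpan A Δ) ≤ κ ∧
      negSquares J (Jorth J (eigSpan A Δ)) = κ - negSquares J (eigSpan A Δ) := by
  classical
  set L := eigSpan A Δ with hLdef
  set L' := Jorth J L with hL'def
  have hmemL' : ∀ y, y ∈ L' ↔ ∀ x ∈ L, Jform J x y = 0 := fun y => Iff.rfl
  obtain ⟨P, D, hP, hD, hAeq⟩ := hd
  -- columns of P
  set v : Fin N → (Fin N → ℂ) := fun i => fun k => P k i with hv
  have hAP : A * P = P * D := by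
    rw [hAeq, Matrix.mul_assoc, Matrix.nonsing_inv_mul P hP, Matrix.mul_one]
  have hAv : ∀ i, A *ᵥ v i = D i i • v i := by
    intro i
    funext k
    have h1 : (A *ᵥ v i) k = (A * P) k i := by
      simp [Matrix.mulVec, Matrix.mul_apply, hv, dotProduct]
    rw [h1, hAP, Matrix.mul_apply]
    rw [Finset.sum_eq_single i (fun j _ hj => by rw [hD hj, mul_zero]) (by simp)]
    simp [hv, mul_comm]
  have hvsingle : ∀ i, v i = P *ᵥ Pi.single i 1 := by
    intro i; funext k; simp [Matrix.mulVec_single, hv]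
  have hvne : ∀ i, v i ≠ 0 := by
    intro i hvi
    have h1 : P⁻¹ *ᵥ (P *ᵥ Pi.single i (1 : ℂ)) = Pi.single i (1 : ℂ) := by
      rw [mulVec_mulVec, Matrix.nonsing_inv_mul P hP, one_mulVec]
    rw [← hvsingle i, hvi] at h1
    simp only [mulVec_zero] at h1
    have := congrFun h1 i
    simp at this
  have hvmem : ∀ i, v i ∈ Module.End.eigenspace (Matrix.toLin' A) (D i i) := by
    intro i
    rw [Module.End.mem_eigenspace_iff, Matrix.toLin'_apply]
    exact hAv i
  have hreal : ∀ i, ∃ μ : ℝ, D i i = (μ : ℂ) := by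
    intro i
    have h1 : Module.End.HasEigenvalue (Matrix.toLin' A) (D i i) :=
      Module.End.hasEigenvalue_of_hasEigenvector ⟨hvmem i, hvne i⟩
    have h2 : D i i ∈ spectrum ℂ (Matrix.toLin' A) :=
      Module.End.hasEigenvalue_iff_mem_spectrum.mp h1
    have h3 : Matrix.toLin' A = Matrix.toLinAlgEquiv' A := rfl
    rw [h3, AlgEquiv.spectrum_eq Matrix.toLinAlgEquiv' A] at h2
    obtain ⟨μ, hμ⟩ := hr h2
    exact ⟨μ, hμ.symm⟩
  have hspan : ∀ x : Fin N → ℂ, x = ∑ i, (P⁻¹ *ᵥ x) i • v i := by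
    intro x
    funext k
    have h1 : x = P *ᵥ (P⁻¹ *ᵥ x) := by
      rw [mulVec_mulVec, Matrix.mul_nonsing_inv P hP, one_mulVec]
    calc x k = (P *ᵥ (P⁻¹ *ᵥ x)) k := by rw [← h1]
      _ = ∑ i, P k i * (P⁻¹ *ᵥ x) i := by simp [Matrix.mulVec, dotProduct]
      _ = _ := by
          rw [Finset.sum_apply]
          exact Finset.sum_congr rfl fun i _ => by simp [hv, mul_comm]
  -- each column lies in L ⊔ L'
  have hvLL' : ∀ i, v i ∈ L ⊔ L' := by
    intro i
    obtain ⟨μ, hμ⟩ := hreal i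
    by_cases hμΔ : μ ∈ Δ
    · refine Submodule.mem_sup_left ?_
      rw [hLdef]
      exact Submodule.mem_iSup_of_mem μ (Submodule.mem_iSup_of_mem hμΔ (hμ ▸ hvmem i))
    · refine Submodule.mem_sup_right ?_
      rw [hmemL']
      intro x hx
      rw [Jform_conj hJ, orth_eig hA Δ μ hμΔ (v i) (hμ ▸ hvmem i) x hx, map_zero]
  have hsupT : L ⊔ L' = ⊤ := by
    rw [eq_top_iff]
    intro x _
    rw [hspan x]
    exact Submodule.sum_mem _ fun i _ => Submodule.smul_mem _ _ (hvLL' i)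
  have hdisjT : L ⊓ L' = ⊥ := by
    rw [eq_bot_iff]
    rintro x ⟨hxL, hxL'⟩
    have hall : ∀ w, Jform J w x = 0 := by
      intro w
      rw [hspan w, Jform_sum_left]
      refine Finset.sum_eq_zero fun i _ => ?_
      rw [Jform_smul_left]
      obtain ⟨μ, hμ⟩ := hreal i
      by_cases hμΔ : μ ∈ Δ
      · have hviL : v i ∈ L := by
          rw [hLdef]
          exact Submodule.mem_iSup_of_mem μ (Submodule.mem_iSup_of_mem hμΔ (hμ ▸ hvmem i))
        rw [hxL' (v i) hviL, mul_zero]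
      · rw [orth_eig hA Δ μ hμΔ (v i) (hμ ▸ hvmem i) x hxL, mul_zero]
    have hJx : J *ᵥ x = 0 := by
      funext i
      have h1 := hall (Pi.single i 1)
      rw [Jform, Matrix.mulVec_single] at h1
      have h3 : (J *ᵥ x) i = (star fun k => J k i * 1) ⬝ᵥ x := by
        simp only [Matrix.mulVec, dotProduct, Pi.star_apply]
        refine Finset.sum_congr rfl fun k _ => ?_
        rw [mul_one, hJ.apply i k]
      rw [h3, Pi.zero_apply, ← h1]
      congr 2
    have : x = 0 := by
      have h1 : x = (J⁻¹ * J) *ᵥ x := by rw [Matrix.nonsing_inv_mul J hJinv, one_mulVec]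
      rw [h1, ← mulVec_mulVec, hJx, mulVec_zero]
    simp [this]
  -- orthogonality between L and L'
  have horthLL' : ∀ x ∈ L, ∀ y ∈ L', Jform J x y = 0 ∧ Jform J y x = 0 := by
    intro x hx y hy
    have h1 : Jform J x y = 0 := (hmemL' y).mp hy x hx
    exact ⟨h1, by rw [Jform_conj hJ, h1, map_zero]⟩
  -- splits
  obtain ⟨Wn, Wp, hWnL, hWpL, hWnneg, hWppos, hWsup, hWrk⟩ := exists_split J hJ L
  obtain ⟨Wn', Wp', hWn'L, hWp'L, hWn'neg, hWp'pos, hW'sup, hW'rk⟩ := exists_split J hJ L'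
  have e1 : negSquares J L = Module.finrank ℂ Wn :=
    ns_eq J L Wn Wp hWnL hWpL hWnneg hWppos hWsup hWrk
  have e2 : negSquares J L' = Module.finrank ℂ Wn' :=
    ns_eq J L' Wn' Wp' hWn'L hWp'L hWn'neg hWp'pos hW'sup hW'rk
  -- disjoint rank additions
  have hrkadd : ∀ (U1 U2 : Submodule ℂ (Fin N → ℂ)), U1 ≤ L → U2 ≤ L' →
      Module.finrank ℂ (U1 ⊔ U2 : Submodule ℂ (Fin N → ℂ))
        = Module.finrank ℂ U1 + Module.finrank ℂ U2 := by
    intro U1 U2 hU1 hU2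
    have hinf : U1 ⊓ U2 = ⊥ := by
      rw [eq_bot_iff, ← hdisjT]
      exact inf_le_inf hU1 hU2
    have := Submodule.finrank_sup_add_finrank_inf_eq U1 U2
    rw [hinf, finrank_bot, add_zero] at this
    exact this
  have horth' : ∀ (U1 U2 : Submodule ℂ (Fin N → ℂ)), U1 ≤ L → U2 ≤ L' →
      ∀ x ∈ U1, ∀ y ∈ U2, Jform J x y = 0 ∧ Jform J y x = 0 :=
    fun U1 U2 hU1 hU2 x hx y hy => horthLL' x (hU1 hx) y (hU2 hy)
  -- the split of ⊤
  have hTsup : (Wn ⊔ Wn') ⊔ (Wp ⊔ Wp') = ⊤ := by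
    rw [sup_assoc, ← sup_assoc Wn' Wp Wp', sup_comm Wn' Wp, sup_assoc Wp Wn' Wp',
      ← sup_assoc Wn Wp _, hWsup, hW'sup, hsupT]
  have hTrk : Module.finrank ℂ (Wn ⊔ Wn' : Submodule ℂ (Fin N → ℂ))
      + Module.finrank ℂ (Wp ⊔ Wp' : Submodule ℂ (Fin N → ℂ))
      = Module.finrank ℂ (⊤ : Submodule ℂ (Fin N → ℂ)) := by
    rw [hrkadd Wn Wn' hWnL hWn'L, hrkadd Wp Wp' hWpL hWp'L]
    have hLrk := Submodule.finrank_sup_add_finrank_inf_eq L L'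
    rw [hdisjT, finrank_bot, add_zero, hsupT] at hLrk
    omega
  have hTneg : NegDef J (Wn ⊔ Wn') := negdef_sup hWnneg hWn'neg (horth' Wn Wn' hWnL hWn'L)
  have hTpos : NonNegOn J (Wp ⊔ Wp') := nonneg_sup hWppos hWp'pos (horth' Wp Wp' hWpL hWp'L)
  have eT : negSquares J ⊤ = Module.finrank ℂ (Wn ⊔ Wn' : Submodule ℂ (Fin N → ℂ)) :=
    ns_eq J ⊤ (Wn ⊔ Wn') (Wp ⊔ Wp') le_top le_top hTneg hTpos hTsup hTrk
  have eκ : κ = Module.finrank ℂ Wn + Module.finrank ℂ Wn' := by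
    rw [← hκ, ← ns_top J hJ, eT, hrkadd Wn Wn' hWnL hWn'L]
  constructor
  · omega
  · omega
end
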